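/- arXiv:1804.01067 — 10 statements merged into one kernel-verified Lean document; each statement's English description precedes it below -/
import Mathlib

section
/- Let c ∈ ℝ and x ∈ ℝ with x > c, let μ, ν ∈ ℂ satisfy Re μ < 0 and Re ν < 0, and let f : ℝ → ℂ be continuous on [c, x]. Then D_{c+}^ν(D_{c+}^μ f)(x) = D_{c+}^{μ+ν} f(x); explicitly, (1/Γ(−ν)) ∫_c^x (x−y)^{−ν−1} · ((1/Γ(−μ)) ∫_c^y (y−z)^{−μ−1} f(z) dz) dy = (1/Γ(−μ−ν)) ∫_c^x (x−z)^{−μ−ν−1} f(z) dz. -/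
open MeasureTheory intervalIntegral Complex


lemma cpow_intInt (w : ℂ) (hw : -1 < w.re) (a b : ℝ) :
    IntervalIntegrable (fun z : ℝ => ((b - z : ℝ) : ℂ) ^ w) volume a b := by
  have h := (intervalIntegral.intervalIntegrable_cpow' (a := b - a) (b := b - b) hw).comp_sub_left b
  simpa using h

lemma rpow_intInt {w : ℝ} (hw : -1 < w) (a b : ℝ) :
    IntervalIntegrable (fun z : ℝ => (b - z) ^ w) volume a b := by
  have h := (intervalIntegral.intervalIntegrable_rpow' (a := b - a) (b := b - b) hw).comp_sub_left b
  simpa using h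

lemma beta_eval {μ ν : ℂ} (hμ : μ.re < 0) (hν : ν.re < 0) {z x : ℝ} (h : z < x) :
    ∫ y in z..x, ((y - z : ℝ) : ℂ) ^ (-μ - 1) * ((x - y : ℝ) : ℂ) ^ (-ν - 1) =
      ((x - z : ℝ) : ℂ) ^ (-(μ + ν) - 1) * Complex.betaIntegral (-μ) (-ν) := by
  have ha : (0:ℝ) < x - z := sub_pos.2 h
  have hb := Complex.betaIntegral_scaled (-μ) (-ν) ha
  have comp : (∫ y in z..x, ((y - z : ℝ) : ℂ) ^ (-μ - 1) * ((x - y : ℝ) : ℂ) ^ (-ν - 1))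
      = ∫ t in (z - z)..(x - z),
          ((t : ℝ) : ℂ) ^ (-μ - 1) * (((x - z : ℝ) : ℂ) - (t : ℝ)) ^ (-ν - 1) := by
    rw [← intervalIntegral.integral_comp_sub_right
      (fun t : ℝ => ((t : ℝ) : ℂ) ^ (-μ - 1) * (((x - z : ℝ) : ℂ) - (t : ℝ)) ^ (-ν - 1)) z]
    apply intervalIntegral.integral_congr
    intro y _
    have : ((x - z : ℝ) : ℂ) - ((y - z : ℝ) : ℂ) = ((x - y : ℝ) : ℂ) := by push_cast; ring
    simp only [this]
  rw [comp, sub_self]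
  convert hb using 2 <;> ring

noncomputable def Kk (x : ℝ) (μ ν : ℂ) (f : ℝ → ℂ) : ℝ → ℝ → ℂ := fun y z =>
  ((x - y : ℝ) : ℂ) ^ (-ν - 1) * (((y - z : ℝ) : ℂ) ^ (-μ - 1) * f z)

def Tt (c x : ℝ) : Set (ℝ × ℝ) := {p | c < p.2 ∧ p.2 < p.1 ∧ p.1 < x}

noncomputable def Gg (c x : ℝ) (μ ν : ℂ) (f : ℝ → ℂ) : ℝ × ℝ → ℂ :=
  (Tt c x).indicator fun p => Kk x μ ν f p.1 p.2

lemma hTmeas (c x : ℝ) : MeasurableSet (Tt c x) := by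
  have : Tt c x = ({p : ℝ × ℝ | c < p.2} ∩ {p | p.2 < p.1}) ∩ {p | p.1 < x} := by
    ext p; simp [Tt]; tauto
  rw [this]
  exact ((measurableSet_lt measurable_const measurable_snd).inter
    (measurableSet_lt measurable_snd measurable_fst)).inter
    (measurableSet_lt measurable_fst measurable_const)

lemma hGmeas (c x : ℝ) (μ ν : ℂ) (f : ℝ → ℂ) (hf : Continuous f) :
    AEStronglyMeasurable (Gg c x μ ν f) (volume.prod volume) := by
  rw [Gg, aestronglyMeasurable_indicator_iff (hTmeas c x)]
  apply ContinuousOn.aestronglyMeasurable _ (hTmeas c x)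
  intro p hp
  obtain ⟨h1, h2, h3⟩ := hp
  apply ContinuousAt.continuousWithinAt
  have c1 : ContinuousAt (fun p : ℝ × ℝ => ((x - p.1 : ℝ) : ℂ) ^ (-ν - 1)) p :=
    ContinuousAt.comp
      (continuousAt_ofReal_cpow_const _ _ (Or.inr (by exact ne_of_gt (by linarith))))
      ((continuous_const.sub continuous_fst).continuousAt)
  have c2 : ContinuousAt (fun p : ℝ × ℝ => ((p.1 - p.2 : ℝ) : ℂ) ^ (-μ - 1)) p :=
    ContinuousAt.comp
      (continuousAt_ofReal_cpow_const _ _ (Or.inr (by exact ne_of_gt (by linarith))))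
      ((continuous_fst.sub continuous_snd).continuousAt)
  exact c1.mul (c2.mul (hf.comp continuous_snd).continuousAt)
variable {c x : ℝ} {μ ν : ℂ} {f : ℝ → ℂ}

lemma slice_mem (hy : y ∈ Set.Ioo c x) (z : ℝ) :
    Gg c x μ ν f (y, z) = Set.indicator (Set.Ioo c y) (fun z => Kk x μ ν f y z) z := by
  simp only [Gg, Tt, Set.indicator_apply, Set.mem_setOf_eq, Set.mem_Ioo]
  by_cases h : c < z ∧ z < y
  · rw [if_pos ⟨h.1, h.2, hy.2⟩, if_pos h]
  · rw [if_neg (by tauto), if_neg h]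

lemma slice_not_mem (hy : y ∉ Set.Ioo c x) (z : ℝ) : Gg c x μ ν f (y, z) = 0 := by
  simp only [Gg, Tt, Set.indicator_apply, Set.mem_setOf_eq]
  rw [if_neg]
  rintro ⟨h1, h2, h3⟩
  exact hy ⟨h1.trans h2, h3⟩

lemma slice2_mem (hz : z ∈ Set.Ioo c x) (y : ℝ) :
    Gg c x μ ν f (y, z) = Set.indicator (Set.Ioo z x) (fun y => Kk x μ ν f y z) y := by
  simp only [Gg, Tt, Set.indicator_apply, Set.mem_setOf_eq, Set.mem_Ioo]
  by_cases h : z < y ∧ y < x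
  · rw [if_pos ⟨hz.1, h.1, h.2⟩, if_pos h]
  · rw [if_neg (by tauto), if_neg h]

lemma slice2_not_mem (hz : z ∉ Set.Ioo c x) (y : ℝ) : Gg c x μ ν f (y, z) = 0 := by
  simp only [Gg, Tt, Set.indicator_apply, Set.mem_setOf_eq]
  rw [if_neg]
  rintro ⟨h1, h2, h3⟩
  exact hz ⟨h1, h2.trans h3⟩

lemma hyint (hf : Continuous f) (hμ : μ.re < 0) (hy : y ∈ Set.Ioo c x) :
    IntegrableOn (fun z => Kk x μ ν f y z) (Set.Ioo c y) := by
  have h1 : IntervalIntegrable (fun z => ((y - z : ℝ) : ℂ) ^ (-μ - 1) * f z) volume c y :=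
    (cpow_intInt (-μ - 1) (by simp; linarith) c y).mul_continuousOn hf.continuousOn
  exact ((h1.const_mul (((x - y : ℝ) : ℂ) ^ (-ν - 1))).1).mono_set Set.Ioo_subset_Ioc_self

lemma norm_Kk (hy : y ∈ Set.Ioo c x) (hz : z ∈ Set.Ioo c y) :
    ‖Kk x μ ν f y z‖ = (x - y) ^ ((-ν - 1).re) * ((y - z) ^ ((-μ - 1).re) * ‖f z‖) := by
  rw [Kk]
  rw [norm_mul, norm_mul,
    Complex.norm_cpow_eq_rpow_re_of_pos (by linarith [hy.2] : (0:ℝ) < x - y),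
    Complex.norm_cpow_eq_rpow_re_of_pos (by linarith [hz.2] : (0:ℝ) < y - z)]

lemma Ioo_rpow_int {w : ℝ} (hw : -1 < w) (hcy : c ≤ y) :
    IntegrableOn (fun z => (y - z) ^ w) (Set.Ioo c y) :=
  ((rpow_intInt hw c y).1).mono_set Set.Ioo_subset_Ioc_self

lemma rpow_Ioo_eval {w : ℝ} (hw : -1 < w) (hcy : c ≤ y) :
    ∫ z in Set.Ioo c y, (y - z) ^ w = (y - c) ^ (w + 1) / (w + 1) := by
  have h0 : (0:ℝ) < w + 1 := by linarith
  calc ∫ z in Set.Ioo c y, (y - z) ^ w = ∫ z in c..y, (y - z) ^ w := by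
        rw [intervalIntegral.integral_of_le hcy, integral_Ioc_eq_integral_Ioo]
    _ = ∫ t in (y - y)..(y - c), t ^ w :=
        intervalIntegral.integral_comp_sub_left (fun t : ℝ => t ^ w) y
    _ = (y - c) ^ (w + 1) / (w + 1) := by
        rw [sub_self, integral_rpow (Or.inl hw), Real.zero_rpow (by linarith), sub_zero]

lemma key_bound (hf : Continuous f) (hμ : μ.re < 0) {M : ℝ}
    (hM : ∀ z ∈ Set.Icc c x, ‖f z‖ ≤ M) (hM0 : 0 ≤ M) (hy : y ∈ Set.Ioo c x) :
    (∫ z, ‖Gg c x μ ν f (y, z)‖) ≤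
      (M * ((x - c) ^ ((-μ - 1).re + 1) / ((-μ - 1).re + 1))) * (x - y) ^ ((-ν - 1).re) := by
  have hbμ : (-1:ℝ) < (-μ - 1).re := by simp; linarith
  have haν : (0:ℝ) ≤ (x - y) ^ ((-ν - 1).re) := Real.rpow_nonneg (by linarith [hy.2]) _
  calc (∫ z, ‖Gg c x μ ν f (y, z)‖)
      = ∫ z in Set.Ioo c y, ‖Kk x μ ν f y z‖ := by
        rw [← MeasureTheory.integral_indicator measurableSet_Ioo]
        congr 1
        funext z
        rw [slice_mem hy z, norm_indicator_eq_indicator_norm]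
    _ ≤ ∫ z in Set.Ioo c y, (x - y) ^ ((-ν - 1).re) * ((y - z) ^ ((-μ - 1).re) * M) := by
        apply setIntegral_mono_on ((hyint hf hμ hy).norm) _ measurableSet_Ioo
        · intro z hz
          rw [norm_Kk hy hz]
          have : ‖f z‖ ≤ M := hM z ⟨hz.1.le, by linarith [hz.2, hy.2]⟩
          have h1 : (0:ℝ) ≤ (y - z) ^ ((-μ - 1).re) := Real.rpow_nonneg (by linarith [hz.2]) _
          exact mul_le_mul_of_nonneg_left (mul_le_mul_of_nonneg_left this h1) haν
        · exact (((Ioo_rpow_int hbμ hy.1.le).mul_const M).const_mul _)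
    _ = (x - y) ^ ((-ν - 1).re) * (((y - c) ^ ((-μ - 1).re + 1) / ((-μ - 1).re + 1)) * M) := by
        rw [MeasureTheory.integral_const_mul, MeasureTheory.integral_mul_const, rpow_Ioo_eval hbμ hy.1.le]
    _ ≤ (M * ((x - c) ^ ((-μ - 1).re + 1) / ((-μ - 1).re + 1))) * (x - y) ^ ((-ν - 1).re) := by
        rw [mul_comm]
        apply mul_le_mul_of_nonneg_right _ haν
        rw [mul_comm]
        apply mul_le_mul_of_nonneg_left _ hM0
        apply div_le_div_of_nonneg_right ?_ ?_ |>.trans_eq rfl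
        · exact Real.rpow_le_rpow (by linarith [hy.1]) (by linarith [hy.2]) (by linarith)
        · linarith

lemma Gg_integrable (hx : c < x) (hf : Continuous f) (hμ : μ.re < 0) (hν : ν.re < 0) :
    Integrable (Gg c x μ ν f) (volume.prod volume) := by
  obtain ⟨M₀, hM₀⟩ := (isCompact_Icc : IsCompact (Set.Icc c x)).exists_bound_of_continuousOn
    hf.continuousOn
  set M : ℝ := max M₀ 0 with hMdef
  have hM : ∀ z ∈ Set.Icc c x, ‖f z‖ ≤ M := fun z hz => (hM₀ z hz).trans (le_max_left _ _)
  have hM0 : (0:ℝ) ≤ M := le_max_right _ _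
  have haν : (-1:ℝ) < (-ν - 1).re := by simp; linarith
  rw [integrable_prod_iff (hGmeas c x μ ν f hf)]
  constructor
  · apply ae_of_all
    intro y
    by_cases hy : y ∈ Set.Ioo c x
    · simp only [slice_mem hy]
      rw [integrable_indicator_iff measurableSet_Ioo]
      exact hyint hf hμ hy
    · simp only [slice_not_mem hy]
      exact integrable_zero _ _ _
  · apply Integrable.mono'
      (g := Set.indicator (Set.Ioo c x)
        (fun y => (M * ((x - c) ^ ((-μ - 1).re + 1) / ((-μ - 1).re + 1))) * (x - y) ^ ((-ν - 1).re)))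
    · rw [integrable_indicator_iff measurableSet_Ioo]
      exact (((rpow_intInt haν c x).const_mul _).1).mono_set Set.Ioo_subset_Ioc_self
    · exact (hGmeas c x μ ν f hf).norm.integral_prod_right'
    · apply ae_of_all
      intro y
      by_cases hy : y ∈ Set.Ioo c x
      · rw [Set.indicator_of_mem hy, Real.norm_eq_abs,
          _root_.abs_of_nonneg (MeasureTheory.integral_nonneg fun z => norm_nonneg _)]
        exact key_bound hf hμ hM hM0 hy
      · simp only [slice_not_mem hy, Set.indicator_of_notMem hy]
        simp

lemma iter1 (hx : c < x) :
    (∫ y in c..x, ∫ z in c..y, Kk x μ ν f y z) = ∫ y, ∫ z, Gg c x μ ν f (y, z) := by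
  rw [intervalIntegral.integral_of_le hx.le, integral_Ioc_eq_integral_Ioo,
    ← MeasureTheory.integral_indicator measurableSet_Ioo]
  congr 1
  funext y
  by_cases hy : y ∈ Set.Ioo c x
  · rw [Set.indicator_of_mem hy]
    simp only [slice_mem hy]
    rw [MeasureTheory.integral_indicator measurableSet_Ioo,
      intervalIntegral.integral_of_le hy.1.le, integral_Ioc_eq_integral_Ioo]
  · rw [Set.indicator_of_notMem hy]
    simp only [slice_not_mem hy]
    simp

lemma iter2 (hx : c < x) :
    (∫ z, ∫ y, Gg c x μ ν f (y, z)) = ∫ z in c..x, ∫ y in z..x, Kk x μ ν f y z := by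
  rw [intervalIntegral.integral_of_le hx.le, integral_Ioc_eq_integral_Ioo,
    ← MeasureTheory.integral_indicator measurableSet_Ioo]
  congr 1
  funext z
  by_cases hz : z ∈ Set.Ioo c x
  · rw [Set.indicator_of_mem hz]
    simp only [slice2_mem hz]
    rw [MeasureTheory.integral_indicator measurableSet_Ioo,
      intervalIntegral.integral_of_le hz.2.le, integral_Ioc_eq_integral_Ioo]
  · rw [Set.indicator_of_notMem hz]
    simp only [slice2_not_mem hz]
    simp

lemma inner_eval (hμ : μ.re < 0) (hν : ν.re < 0) (hzx : z < x) :
    (∫ y in z..x, Kk x μ ν f y z) =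
      Complex.betaIntegral (-μ) (-ν) * (((x - z : ℝ) : ℂ) ^ (-(μ + ν) - 1) * f z) := by
  have : ∀ y : ℝ, Kk x μ ν f y z =
      (((y - z : ℝ) : ℂ) ^ (-μ - 1) * ((x - y : ℝ) : ℂ) ^ (-ν - 1)) * f z := by
    intro y; rw [Kk]; ring
  simp only [this]
  rw [intervalIntegral.integral_mul_const, beta_eval hμ hν hzx]
  ring

theorem aux (hx : c < x) (hμ : μ.re < 0) (hν : ν.re < 0) (hf : Continuous f) :
    (∫ y in c..x, ((x - y : ℝ) : ℂ) ^ (-ν - 1) *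
        ∫ z in c..y, ((y - z : ℝ) : ℂ) ^ (-μ - 1) * f z) =
      Complex.betaIntegral (-μ) (-ν) *
        ∫ z in c..x, ((x - z : ℝ) : ℂ) ^ (-(μ + ν) - 1) * f z := by
  have hne : ∀ᵐ z : ℝ, z ≠ x := by
    refine measure_mono_null (fun z hz => ?_) (measure_singleton x)
    simpa using hz
  calc (∫ y in c..x, ((x - y : ℝ) : ℂ) ^ (-ν - 1) *
        ∫ z in c..y, ((y - z : ℝ) : ℂ) ^ (-μ - 1) * f z)
      = ∫ y in c..x, ∫ z in c..y, Kk x μ ν f y z := by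
        apply intervalIntegral.integral_congr
        intro y _
        dsimp only
        rw [← intervalIntegral.integral_const_mul]
        simp only [Kk]
    _ = ∫ y, ∫ z, Gg c x μ ν f (y, z) := iter1 hx
    _ = ∫ z, ∫ y, Gg c x μ ν f (y, z) := integral_integral_swap (Gg_integrable hx hf hμ hν)
    _ = ∫ z in c..x, ∫ y in z..x, Kk x μ ν f y z := iter2 hx
    _ = ∫ z in c..x, Complex.betaIntegral (-μ) (-ν) *
          (((x - z : ℝ) : ℂ) ^ (-(μ + ν) - 1) * f z) := by
        apply intervalIntegral.integral_congr_ae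
        filter_upwards [hne] with z hzne hz
        rw [Set.uIoc_of_le hx.le] at hz
        exact inner_eval hμ hν (lt_of_le_of_ne hz.2 hzne)
    _ = Complex.betaIntegral (-μ) (-ν) *
          ∫ z in c..x, ((x - z : ℝ) : ℂ) ^ (-(μ + ν) - 1) * f z := by
        rw [intervalIntegral.integral_const_mul]


/-- Composition of Riemann–Liouville fractional integrals with finite basepoint:
`D_{c+}^ν (D_{c+}^μ f) (x) = D_{c+}^{μ+ν} f (x)` for `Re μ < 0`, `Re ν < 0`,
and `f` continuous on `[c, x]`. -/
theorem rl_integral_composition (c x : ℝ) (hx : c < x) (μ ν : ℂ)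
    (hμ : μ.re < 0) (hν : ν.re < 0) (f : ℝ → ℂ)
    (hf : ContinuousOn f (Set.Icc c x)) :
    (1 / Complex.Gamma (-ν)) *
        ∫ y in c..x, ((x - y : ℝ) : ℂ) ^ (-ν - 1) *
          ((1 / Complex.Gamma (-μ)) *
            ∫ z in c..y, ((y - z : ℝ) : ℂ) ^ (-μ - 1) * f z) =
      (1 / Complex.Gamma (-(μ + ν))) *
        ∫ z in c..x, ((x - z : ℝ) : ℂ) ^ (-(μ + ν) - 1) * f z := by
  set g : ℝ → ℂ := fun z => f (max c (min z x)) with hgdef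
  have hg : Continuous g := by
    apply hf.comp_continuous (continuous_const.max (continuous_id.min continuous_const))
    intro z
    exact ⟨le_max_left _ _, max_le hx.le (min_le_right z x)⟩
  have hfg : ∀ z ∈ Set.Icc c x, f z = g z := by
    intro z hz
    rw [hgdef]
    dsimp only
    rw [min_eq_left hz.2, max_eq_right hz.1]
  have e1 : (∫ z in c..x, ((x - z : ℝ) : ℂ) ^ (-(μ + ν) - 1) * f z)
      = ∫ z in c..x, ((x - z : ℝ) : ℂ) ^ (-(μ + ν) - 1) * g z := by
    apply intervalIntegral.integral_congr
    intro z hz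
    rw [Set.uIcc_of_le hx.le] at hz
    dsimp only
    rw [hfg z hz]
  have e2 : (∫ y in c..x, ((x - y : ℝ) : ℂ) ^ (-ν - 1) *
        ((1 / Complex.Gamma (-μ)) * ∫ z in c..y, ((y - z : ℝ) : ℂ) ^ (-μ - 1) * f z))
      = ∫ y in c..x, ((x - y : ℝ) : ℂ) ^ (-ν - 1) *
        ((1 / Complex.Gamma (-μ)) * ∫ z in c..y, ((y - z : ℝ) : ℂ) ^ (-μ - 1) * g z) := by
    apply intervalIntegral.integral_congr
    intro y hy
    rw [Set.uIcc_of_le hx.le] at hy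
    dsimp only
    congr 2
    apply intervalIntegral.integral_congr
    intro z hz
    rw [Set.uIcc_of_le hy.1] at hz
    dsimp only
    rw [hfg z ⟨hz.1, hz.2.trans hy.2⟩]
  have hμ' : (0:ℝ) < (-μ).re := by simp; linarith
  have hν' : (0:ℝ) < (-ν).re := by simp; linarith
  have hμν' : (0:ℝ) < (-(μ + ν)).re := by simp; linarith
  have hBeta := Complex.Gamma_mul_Gamma_eq_betaIntegral hμ' hν'
  rw [show -μ + -ν = -(μ + ν) by ring] at hBeta
  have h1 : Complex.Gamma (-μ) ≠ 0 := Complex.Gamma_ne_zero_of_re_pos hμ'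
  have h2 : Complex.Gamma (-ν) ≠ 0 := Complex.Gamma_ne_zero_of_re_pos hν'
  have h3 : Complex.Gamma (-(μ + ν)) ≠ 0 := Complex.Gamma_ne_zero_of_re_pos hμν'
  have hscalar : (1 / Complex.Gamma (-ν)) * ((1 / Complex.Gamma (-μ)) *
      Complex.betaIntegral (-μ) (-ν)) = 1 / Complex.Gamma (-(μ + ν)) := by
    have e : -(μ + ν) = -ν - μ := by ring
    rw [e] at hBeta h3 ⊢
    field_simp
    linear_combination -hBeta
  have pull : (∫ y in c..x, ((x - y : ℝ) : ℂ) ^ (-ν - 1) *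
        ((1 / Complex.Gamma (-μ)) * ∫ z in c..y, ((y - z : ℝ) : ℂ) ^ (-μ - 1) * g z))
      = (1 / Complex.Gamma (-μ)) * ∫ y in c..x, ((x - y : ℝ) : ℂ) ^ (-ν - 1) *
        ∫ z in c..y, ((y - z : ℝ) : ℂ) ^ (-μ - 1) * g z := by
    rw [← intervalIntegral.integral_const_mul]
    apply intervalIntegral.integral_congr
    intro y _
    dsimp only
    ring
  calc (1 / Complex.Gamma (-ν)) *
        ∫ y in c..x, ((x - y : ℝ) : ℂ) ^ (-ν - 1) *
          ((1 / Complex.Gamma (-μ)) *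
            ∫ z in c..y, ((y - z : ℝ) : ℂ) ^ (-μ - 1) * f z)
      = (1 / Complex.Gamma (-ν)) * ((1 / Complex.Gamma (-μ)) *
          (Complex.betaIntegral (-μ) (-ν) *
            ∫ z in c..x, ((x - z : ℝ) : ℂ) ^ (-(μ + ν) - 1) * g z)) := by
        rw [e2, pull, aux hx hμ hν hg]
    _ = ((1 / Complex.Gamma (-ν)) * ((1 / Complex.Gamma (-μ)) *
          Complex.betaIntegral (-μ) (-ν))) *
          ∫ z in c..x, ((x - z : ℝ) : ℂ) ^ (-(μ + ν) - 1) * g z := by ring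
    _ = (1 / Complex.Gamma (-(μ + ν))) *
          ∫ z in c..x, ((x - z : ℝ) : ℂ) ^ (-(μ + ν) - 1) * f z := by
        rw [hscalar, e1]
end

section
/- Let μ, ν ∈ ℂ satisfy Re μ < 0 and Re ν < 0, and let f : ℝ → ℂ be a Schwartz function. Then for every x ∈ ℝ, D_+^ν(D_+^μ f)(x) = D_+^{μ+ν} f(x); explicitly, (1/Γ(−ν)) ∫_{−∞}^x (x−y)^{−ν−1} · ((1/Γ(−μ)) ∫_{−∞}^y (y−z)^{−μ−1} f(z) dz) dy = (1/Γ(−μ−ν)) ∫_{−∞}^x (x−z)^{−μ−ν−1} f(z) dz. -/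
open MeasureTheory Complex SchwartzMap
open Set

lemma kernelII {s t : ℂ} (hs : 0 < s.re) (ht : 0 < t.re) {a b : ℝ} (hab : a ≤ b) :
    IntervalIntegrable (fun y => ((y - a : ℝ) : ℂ) ^ (s - 1) * ((b - y : ℝ) : ℂ) ^ (t - 1))
      volume a b := by
  rcases eq_or_lt_of_le hab with rfl | hab
  · exact IntervalIntegrable.refl
  set c := b - a with hc
  have hc0 : 0 < c := sub_pos.2 hab
  have h0 := Complex.betaIntegral_convergent hs ht
  have h1 := (h0.comp_mul_right (c := c⁻¹))
  simp only [zero_div, one_div, inv_inv] at h1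
  have h2 := h1.comp_sub_right a
  simp only [zero_add] at h2
  -- h2 : IntervalIntegrable (fun y => (((y - a) * c⁻¹ : ℝ):ℂ)^(s-1) * (1 - ((y-a)*c⁻¹:ℝ):ℂ)^(t-1)) volume a (c + a)
  have hca : c + a = b := by ring
  rw [hca] at h2
  have h3 := h2.const_mul ((c:ℂ) ^ (s - 1) * (c:ℂ) ^ (t - 1))
  rw [intervalIntegrable_iff_integrableOn_Ioc_of_le hab.le] at h3 ⊢
  refine h3.congr_fun (fun y hy => ?_) measurableSet_Ioc
  obtain ⟨hy1, hy2⟩ := hy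
  have hya : 0 ≤ y - a := by linarith
  have hby : 0 ≤ b - y := by linarith
  have hu : (0:ℝ) ≤ (y - a) * c⁻¹ := mul_nonneg hya (by positivity)
  have h1' : (y - a) * c⁻¹ ≤ 1 := by
    rw [← div_eq_mul_inv, div_le_one hc0]; simp [hc]; linarith
  have hyy : c * ((y - a) * c⁻¹) = y - a := by field_simp
  have hby' : c * (1 - (y - a) * c⁻¹) = b - y := by field_simp; ring
  have e1 : ((y - a : ℝ) : ℂ) ^ (s - 1) = (c:ℂ) ^ (s-1) * (((y - a) * c⁻¹ : ℝ) : ℂ) ^ (s-1) := by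
    rw [← Complex.mul_cpow_ofReal_nonneg hc0.le hu, ← Complex.ofReal_mul, hyy]
  have e2 : ((b - y : ℝ) : ℂ) ^ (t - 1) = (c:ℂ) ^ (t-1) * ((1 - (y - a) * c⁻¹ : ℝ) : ℂ) ^ (t-1) := by
    rw [← Complex.mul_cpow_ofReal_nonneg hc0.le (sub_nonneg.2 h1'), ← Complex.ofReal_mul, hby']
  rw [e1, e2]
  push_cast
  ring

lemma kernelIntegral {s t : ℂ} {a b : ℝ} (hab : a < b) :
    ∫ y in a..b, ((y - a : ℝ) : ℂ) ^ (s - 1) * ((b - y : ℝ) : ℂ) ^ (t - 1) =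
      ((b - a : ℝ) : ℂ) ^ (s + t - 1) * Complex.betaIntegral s t := by
  have h := intervalIntegral.integral_comp_sub_right
    (a := a) (b := b) (fun u : ℝ => ((u : ℝ) : ℂ) ^ (s - 1) * (((b - a) - u : ℝ) : ℂ) ^ (t - 1)) a
  simp only [sub_self] at h
  have h2 := Complex.betaIntegral_scaled s t (a := b - a) (by linarith)
  simp only [← Complex.ofReal_sub] at h2
  rw [← h2, ← h]
  apply intervalIntegral.integral_congr
  intro y hy
  have e : b - a - (y - a) = b - y := by ring
  simp only [e]

lemma normKernelIntegral {A B : ℝ} {a b : ℝ} (hab : a < b) :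
    ∫ y in a..b, (y - a) ^ (B - 1) * (b - y) ^ (A - 1) =
      (b - a) ^ (A + B - 1) * (Complex.betaIntegral B A).re := by
  have h := kernelIntegral (s := (B:ℂ)) (t := (A:ℂ)) (a := a) (b := b) hab
  have hre : ((∫ y in a..b, (y - a) ^ (B - 1) * (b - y) ^ (A - 1) : ℝ) : ℂ) =
      ∫ y in a..b, ((y - a : ℝ) : ℂ) ^ ((B:ℂ) - 1) * ((b - y : ℝ) : ℂ) ^ ((A:ℂ) - 1) := by
    rw [← intervalIntegral.integral_ofReal]
    apply intervalIntegral.integral_congr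
    intro y hy
    rw [uIcc_of_le hab.le] at hy
    simp only [Complex.ofReal_mul]
    rw [Complex.ofReal_cpow (by linarith [hy.1] : (0:ℝ) ≤ y - a),
      Complex.ofReal_cpow (by linarith [hy.2] : (0:ℝ) ≤ b - y)]
    push_cast
    ring
  have h2 : ((b - a : ℝ) : ℂ) ^ ((A:ℂ) + (B:ℂ) - 1) = ((((b - a) ^ (A + B - 1) : ℝ)) : ℂ) := by
    rw [Complex.ofReal_cpow (by linarith : (0:ℝ) ≤ b - a)]
    push_cast
    ring_nf
  have h3 : (B:ℂ) + (A:ℂ) - 1 = (A:ℂ) + (B:ℂ) - 1 := by ring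
  rw [h3, h2] at h
  have key := hre.trans h
  have := congrArg Complex.re key
  rwa [Complex.ofReal_re, Complex.re_ofReal_mul] at this

lemma weight_integrable (f : SchwartzMap ℝ ℂ) {c : ℝ} (hc : -1 < c) (x : ℝ) :
    IntegrableOn (fun z => (x - z) ^ c * ‖f z‖) (Set.Iic x) volume := by
  have hmeas : AEStronglyMeasurable (fun z => (x - z) ^ c * ‖f z‖) volume := by
    apply AEStronglyMeasurable.mul
    · exact ((measurable_const.sub measurable_id).pow measurable_const).aestronglyMeasurable
    · exact f.continuous.norm.aestronglyMeasurable
  rw [← Set.Iic_union_Ioc_eq_Iic (by linarith : x - 1 ≤ x)]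
  apply IntegrableOn.union
  · -- tail part
    set n : ℕ := ⌈c⌉₊ with hn
    have hcn : c ≤ (n : ℝ) := Nat.le_ceil c
    have hD : Integrable (fun z : ℝ =>
        (1 + |x|) ^ n * (2 ^ n * (‖f z‖ + ‖z‖ ^ n * ‖f z‖))) volume := by
      exact (((f.integrable (μ := volume)).norm.add (f.integrable_pow_mul volume n)).const_mul
        _).const_mul _
    refine Integrable.mono (hD.restrict) (hmeas.restrict) ?_
    filter_upwards [ae_restrict_mem measurableSet_Iic] with z hz
    have hz' : z ≤ x - 1 := hz
    have h1 : (1:ℝ) ≤ x - z := by linarith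
    have hfz : (0:ℝ) ≤ ‖f z‖ := norm_nonneg _
    have step1 : (x - z) ^ c ≤ (x - z) ^ (n:ℝ) :=
      Real.rpow_le_rpow_of_exponent_le h1 hcn
    have step2 : x - z ≤ (1 + |x|) * (1 + |z|) := by
      have := le_abs_self x
      have := neg_le_abs z
      nlinarith [abs_nonneg x, abs_nonneg z]
    have step3 : (1 + |z|) ^ n ≤ 2 ^ n * (1 + |z| ^ n) := by
      have hmax : 1 + |z| ≤ 2 * max 1 |z| := by
        have := le_max_left (1:ℝ) |z|
        have := le_max_right (1:ℝ) |z|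
        linarith
      calc (1 + |z|) ^ n ≤ (2 * max 1 |z|) ^ n :=
            pow_le_pow_left₀ (by positivity) hmax n
        _ = 2 ^ n * (max 1 |z|) ^ n := by rw [mul_pow]
        _ ≤ 2 ^ n * (1 + |z| ^ n) := by
            gcongr
            rcases le_total |z| 1 with h | h
            · rw [max_eq_left h]; simp [pow_nonneg (abs_nonneg z)]
            · rw [max_eq_right h]
              nlinarith [pow_nonneg (abs_nonneg z) n]
    have hxz0 : (0:ℝ) ≤ x - z := by linarith
    simp only [Real.norm_eq_abs]
    rw [_root_.abs_of_nonneg (mul_nonneg (Real.rpow_nonneg hxz0 c) hfz),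
      _root_.abs_of_nonneg (by positivity)]
    calc (x - z) ^ c * ‖f z‖ ≤ (x - z) ^ (n:ℝ) * ‖f z‖ := by gcongr
      _ = (x - z) ^ n * ‖f z‖ := by rw [Real.rpow_natCast]
      _ ≤ ((1 + |x|) * (1 + |z|)) ^ n * ‖f z‖ := by
          gcongr
      _ = (1 + |x|) ^ n * ((1 + |z|) ^ n * ‖f z‖) := by rw [mul_pow]; ring
      _ ≤ (1 + |x|) ^ n * ((2 ^ n * (1 + |z| ^ n)) * ‖f z‖) := by
          have h2 : (0:ℝ) ≤ (1 + |x|) ^ n := by positivity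
          have := mul_le_mul_of_nonneg_right step3 hfz
          nlinarith
      _ = (1 + |x|) ^ n * (2 ^ n * (‖f z‖ + |z| ^ n * ‖f z‖)) := by ring
  · -- near the singularity
    have hint : IntegrableOn (fun z => (x - z) ^ c) (Set.Ioc (x-1) x) volume := by
      have h0 := intervalIntegral.intervalIntegrable_rpow' (a := 0) (b := 1) hc
      have h1 := h0.comp_sub_left x
      simp only [sub_zero, sub_self] at h1
      rw [← intervalIntegrable_iff_integrableOn_Ioc_of_le (by linarith : x - 1 ≤ x)]
      exact h1.symm
    have hbdd : ∃ C, ∀ z : ℝ, ‖‖f z‖‖ ≤ C := by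
      refine ⟨(SchwartzMap.seminorm ℝ 0 0) f, fun z => ?_⟩
      rw [norm_norm]
      exact SchwartzMap.norm_le_seminorm ℝ f z
    have := hint.bdd_mul (f.continuous.norm.aestronglyMeasurable.restrict) (ae_of_all _ (Classical.choose_spec hbdd))
    exact this.congr (Filter.Eventually.of_forall fun z => mul_comm _ _)

/-- Composition of Riemann–Liouville fractional integrals with basepoint `-∞`:
`D_+^ν (D_+^μ f) = D_+^{μ+ν} f` for `Re μ < 0`, `Re ν < 0`, and `f` Schwartz. -/
theorem rl_integral_composition_schwartz (μ ν : ℂ) (hμ : μ.re < 0) (hν : ν.re < 0)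
    (f : SchwartzMap ℝ ℂ) (x : ℝ) :
    (1 / Complex.Gamma (-ν)) *
        ∫ y in Set.Iic x, ((x - y : ℝ) : ℂ) ^ (-ν - 1) *
          ((1 / Complex.Gamma (-μ)) *
            ∫ z in Set.Iic y, ((y - z : ℝ) : ℂ) ^ (-μ - 1) * f z) =
      (1 / Complex.Gamma (-(μ + ν))) *
        ∫ z in Set.Iic x, ((x - z : ℝ) : ℂ) ^ (-(μ + ν) - 1) * f z := by
  have hs : 0 < (-μ).re := by simp [Complex.neg_re]; linarith
  have ht : 0 < (-ν).re := by simp [Complex.neg_re]; linarith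
  set ρ := volume.restrict (Set.Iic x) with hρ
  set K : ℝ → ℝ → ℂ := fun y z => ((x - y : ℝ) : ℂ) ^ (-ν - 1) *
    (((y - z : ℝ) : ℂ) ^ (-μ - 1) * f z) with hK
  set G : ℝ → ℝ → ℂ := fun y z => Set.indicator (Set.Iic y) (fun z' => K y z') z with hG
  -- measurability
  have hKm : Measurable (Function.uncurry K) := by
    apply Measurable.mul
    · exact (Complex.measurable_ofReal.comp
        (measurable_const.sub measurable_fst)).pow measurable_const
    · exact ((Complex.measurable_ofReal.comp
        (measurable_fst.sub measurable_snd)).pow measurable_const).mul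
        (f.continuous.measurable.comp measurable_snd)
  have hGeq : Function.uncurry G = Set.indicator {p : ℝ × ℝ | p.2 ≤ p.1}
      (Function.uncurry K) := by
    funext p
    simp only [Function.uncurry, hG, Set.indicator_apply, Set.mem_Iic, Set.mem_setOf_eq]
  have hGm : AEStronglyMeasurable (Function.uncurry G) (ρ.prod ρ) := by
    rw [hGeq]
    exact (hKm.indicator (measurableSet_le measurable_snd measurable_fst)).aestronglyMeasurable
  -- a.e. facts on ρ
  have hxne : ∀ᵐ z ∂ρ, z ≠ x := by
    refine ae_iff.2 ?_
    have : {z : ℝ | ¬ z ≠ x} = {x} := by ext z; simp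
    rw [this, hρ, Measure.restrict_apply (measurableSet_singleton x)]
    exact measure_mono_null Set.inter_subset_left (measure_singleton x)
  -- slice integrability in y, for z < x
  have hslice : ∀ z : ℝ, z < x → IntegrableOn (fun y => K y z) (Set.Icc z x) volume := by
    intro z hz
    have h1 : IntervalIntegrable
        (fun y => ((y - z : ℝ) : ℂ) ^ (-μ - 1) * ((x - y : ℝ) : ℂ) ^ (-ν - 1)) volume z x := by
      have := kernelII (s := -μ) (t := -ν) hs ht hz.le
      simpa using this
    have h2 := (intervalIntegrable_iff_integrableOn_Ioc_of_le hz.le).1 h1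
    have h3 : IntegrableOn (fun y => K y z) (Set.Ioc z x) volume := by
      refine (h2.mul_const (f z)).congr (Filter.Eventually.of_forall fun y => ?_)
      simp only [hK]; ring
    exact (integrableOn_Icc_iff_integrableOn_Ioc).2 h3
  have hsliceG : ∀ z : ℝ, z ≤ x → z ≠ x → Integrable (fun y => G y z) ρ := by
    intro z hz hzx
    have hzlt : z < x := lt_of_le_of_ne hz hzx
    have he : (fun y => G y z) = fun y => (Set.Ici z).indicator (fun y' => K y' z) y := by
      funext y
      simp only [hG, Set.indicator_apply, Set.mem_Iic, Set.mem_Ici]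
    rw [he]
    rw [integrable_indicator_iff measurableSet_Ici]
    rw [IntegrableOn, hρ, Measure.restrict_restrict measurableSet_Ici, Set.Ici_inter_Iic]
    exact hslice z hzlt
  -- norm integral computation
  set A : ℝ := (-ν).re with hA
  set B : ℝ := (-μ).re with hB
  set Cβ : ℝ := (Complex.betaIntegral (B : ℂ) (A : ℂ)).re with hCβ
  have hnormint : ∀ z : ℝ, z < x →
      ∫ y, ‖G y z‖ ∂ρ = ((x - z) ^ (A + B - 1) * Cβ) * ‖f z‖ := by
    intro z hzlt
    have he : (fun y => ‖G y z‖) = fun y => (Set.Ici z).indicator (fun y' => ‖K y' z‖) y := by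
      funext y
      simp only [hG, Set.indicator_apply, Set.mem_Iic, Set.mem_Ici]
      split <;> simp
    rw [he, hρ, setIntegral_indicator measurableSet_Ici, Set.inter_comm, Set.Ici_inter_Iic,
      MeasureTheory.integral_Icc_eq_integral_Ioc, ← intervalIntegral.integral_of_le hzlt.le]
    have hcongr : ∫ y in z..x, ‖K y z‖ =
        ∫ y in z..x, (y - z) ^ (B - 1) * (x - y) ^ (A - 1) * ‖f z‖ := by
      apply intervalIntegral.integral_congr_ae
      have hne : ∀ᵐ y : ℝ ∂volume, y ≠ x := by
        refine ae_iff.2 ?_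
        have : {y : ℝ | ¬ y ≠ x} = {x} := by ext y; simp
        rw [this]; exact measure_singleton x
      filter_upwards [hne] with y hyx hy
      rw [Set.uIoc_of_le hzlt.le] at hy
      have h1 : 0 < y - z := by linarith [hy.1]
      have h2 : 0 < x - y := lt_of_le_of_ne (by linarith [hy.2]) (by intro h; apply hyx; linarith)
      simp only [hK, norm_mul]
      rw [Complex.norm_cpow_eq_rpow_re_of_pos h2, Complex.norm_cpow_eq_rpow_re_of_pos h1]
      have eA : (-ν - 1).re = A - 1 := by simp [hA, Complex.sub_re, Complex.one_re]
      have eB : (-μ - 1).re = B - 1 := by simp [hB, Complex.sub_re, Complex.one_re]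
      rw [eA, eB]
      ring
    rw [hcongr, intervalIntegral.integral_mul_const, normKernelIntegral hzlt]
  -- joint integrability
  have hGint : Integrable (Function.uncurry G) (ρ.prod ρ) := by
    rw [integrable_prod_iff' hGm]
    constructor
    · filter_upwards [ae_restrict_mem measurableSet_Iic, hxne] with z hz hzx
      exact hsliceG z hz hzx
    · have hA0 : 0 < A := ht
      have hB0 : 0 < B := hs
      have hc : (-1 : ℝ) < A + B - 1 := by linarith
      have hφ : Integrable (fun z => |Cβ| * ((x - z) ^ (A + B - 1) * ‖f z‖)) ρ :=
        (weight_integrable f hc x).const_mul _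
      refine Integrable.mono hφ ?_ ?_
      · exact (hGm.norm.prod_swap.integral_prod_right')
      · filter_upwards [ae_restrict_mem measurableSet_Iic, hxne] with z hz hzx
        have hzlt : z < x := lt_of_le_of_ne hz hzx
        simp only [Function.uncurry_apply_pair]
        rw [hnormint z hzlt]
        have h0 : (0:ℝ) ≤ (x - z) ^ (A + B - 1) := Real.rpow_nonneg (by linarith) _
        simp only [Real.norm_eq_abs, abs_mul, abs_abs, _root_.abs_of_nonneg h0,
          _root_.abs_of_nonneg (norm_nonneg (f z))]
        exact le_of_eq (by ring)
  -- rewrite LHS inner integral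
  have hLHSin : ∫ y in Set.Iic x, ((x - y : ℝ) : ℂ) ^ (-ν - 1) *
      ((1 / Complex.Gamma (-μ)) * ∫ z in Set.Iic y, ((y - z : ℝ) : ℂ) ^ (-μ - 1) * f z) =
      (1 / Complex.Gamma (-μ)) * ∫ y, (∫ z, G y z ∂ρ) ∂ρ := by
    rw [← integral_const_mul]
    apply setIntegral_congr_fun measurableSet_Iic
    intro y hy
    have h1 : ∫ z, G y z ∂ρ = ∫ z in Set.Iic y, K y z := by
      rw [hρ, setIntegral_indicator measurableSet_Iic, Set.Iic_inter_Iic, min_eq_right hy]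
    dsimp only
    rw [h1, hK]
    rw [integral_const_mul]
    ring
  rw [hLHSin, MeasureTheory.integral_integral_swap hGint]
  -- evaluate inner integral after swap
  have heval : ∫ z, (∫ y, G y z ∂ρ) ∂ρ =
      ∫ z, (Complex.betaIntegral (-μ) (-ν) * (((x - z : ℝ) : ℂ) ^ (-(μ + ν) - 1) * f z)) ∂ρ := by
    apply integral_congr_ae
    filter_upwards [ae_restrict_mem measurableSet_Iic, hxne] with z hz hzx
    have hzlt : z < x := lt_of_le_of_ne hz hzx
    have he : (fun y => G y z) = fun y => (Set.Ici z).indicator (fun y' => K y' z) y := by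
      funext y
      simp only [hG, Set.indicator_apply, Set.mem_Iic, Set.mem_Ici]
    rw [he, hρ, setIntegral_indicator measurableSet_Ici, Set.inter_comm, Set.Ici_inter_Iic,
      MeasureTheory.integral_Icc_eq_integral_Ioc, ← intervalIntegral.integral_of_le hzlt.le]
    have hcongr : ∫ y in z..x, K y z =
        ∫ y in z..x, (((y - z : ℝ) : ℂ) ^ (-μ - 1) * ((x - y : ℝ) : ℂ) ^ (-ν - 1)) * f z := by
      apply intervalIntegral.integral_congr
      intro y _
      simp only [hK]; ring
    rw [hcongr, intervalIntegral.integral_mul_const]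
    have hki := kernelIntegral (s := -μ) (t := -ν) (a := z) (b := x) hzlt
    rw [hki]
    have : -μ + -ν - 1 = -(μ + ν) - 1 := by ring
    rw [this]
    ring
  rw [heval, integral_const_mul]
  -- final constants
  have hGne : ∀ s : ℂ, 0 < s.re → Complex.Gamma s ≠ 0 := by
    intro s hs0
    apply Complex.Gamma_ne_zero
    intro m h
    rw [h] at hs0
    simp only [Complex.neg_re, Complex.natCast_re] at hs0
    have : (0:ℝ) ≤ (m:ℝ) := Nat.cast_nonneg m
    linarith
  have hst : 0 < (-(μ + ν)).re := by
    simp only [Complex.neg_re, Complex.add_re]; linarith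
  have hβ : Complex.Gamma (-μ) * Complex.Gamma (-ν) =
      Complex.Gamma (-(μ + ν)) * Complex.betaIntegral (-μ) (-ν) := by
    have := Complex.Gamma_mul_Gamma_eq_betaIntegral hs ht
    rwa [show -μ + -ν = -(μ + ν) by ring] at this
  have hconst : (1 / Complex.Gamma (-ν)) * ((1 / Complex.Gamma (-μ)) *
      Complex.betaIntegral (-μ) (-ν)) = 1 / Complex.Gamma (-(μ + ν)) := by
    have h1 := hGne _ hs
    have h2 := hGne _ ht
    have h3 := hGne _ hst
    apply mul_left_cancel₀ h3
    rw [mul_one_div, div_self h3]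
    calc Complex.Gamma (-(μ + ν)) * ((1 / Complex.Gamma (-ν)) * ((1 / Complex.Gamma (-μ)) *
          Complex.betaIntegral (-μ) (-ν)))
        = (Complex.Gamma (-(μ + ν)) * Complex.betaIntegral (-μ) (-ν)) *
            (1 / Complex.Gamma (-ν)) * (1 / Complex.Gamma (-μ)) := by ring
      _ = (Complex.Gamma (-μ) * Complex.Gamma (-ν)) *
            (1 / Complex.Gamma (-ν)) * (1 / Complex.Gamma (-μ)) := by rw [← hβ]
      _ = (Complex.Gamma (-ν) * (1 / Complex.Gamma (-ν))) *
            (Complex.Gamma (-μ) * (1 / Complex.Gamma (-μ))) := by ring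
      _ = 1 := by rw [mul_one_div, div_self h2, mul_one_div, div_self h1, mul_one]
  calc (1 / Complex.Gamma (-ν)) * ((1 / Complex.Gamma (-μ)) *
        (Complex.betaIntegral (-μ) (-ν) * ∫ z, ((x - z : ℝ) : ℂ) ^ (-(μ + ν) - 1) * f z ∂ρ))
      = ((1 / Complex.Gamma (-ν)) * ((1 / Complex.Gamma (-μ)) *
        Complex.betaIntegral (-μ) (-ν))) * ∫ z, ((x - z : ℝ) : ℂ) ^ (-(μ + ν) - 1) * f z ∂ρ := by
        ring
    _ = (1 / Complex.Gamma (-(μ + ν))) * ∫ z, ((x - z : ℝ) : ℂ) ^ (-(μ + ν) - 1) * f z ∂ρ := by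
        rw [hconst]
end

section
/- Let c ∈ ℝ, let n ∈ ℕ with n ≥ 1, let μ ∈ ℂ with Re μ < 0, and let f : ℝ → ℂ be n times continuously differentiable on [c, ∞). Then for every x > c, the n-th derivative at x of the function u(t) := (1/Γ(−μ)) ∫_c^t (t−y)^{−μ−1} f(y) dy satisfies u^{(n)}(x) = (1/Γ(−μ)) ∫_c^x (x−y)^{−μ−1} f^{(n)}(y) dy + Σ_{k=1}^n ((x−c)^{−μ−k} / Γ(−μ−k+1)) · f^{(n−k)}(c). (That is, D_{c+}^n(D_{c+}^μ f) = D_{c+}^μ(D_{c+}^n f) + Σ_{k=1}^n ((x−c)^{−μ−k}/Γ(−μ−k+1)) f^{(n−k)}(c).) -/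
open MeasureTheory intervalIntegral Complex Finset

section RLaux

open Set Filter Topology Metric

-- helper: derivative of real-to-complex cpow
lemma RL_hasDerivAt_ofReal_cpow' (w : ℂ) (hw : w ≠ 0) {u : ℝ} (hu : u ≠ 0) :
    HasDerivAt (fun y : ℝ => (y : ℂ) ^ w) (w * (u : ℂ) ^ (w - 1)) u := by
  have hr : w - 1 ≠ -1 := by
    intro h; apply hw; have := congrArg (· + 1) h; simpa using this
  have h := hasDerivAt_ofReal_cpow_const' hu hr
  simp only [sub_add_cancel] at h
  have h2 := h.const_mul w
  have : (fun y : ℝ => w * ((y : ℂ) ^ w / w)) = fun y : ℝ => (y : ℂ) ^ w := by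
    funext y; rw [mul_div_cancel₀ _ hw]
  rw [this] at h2
  simpa [mul_comm] using h2

lemma RL_hasDerivAt_sub_const_cpow (w : ℂ) (hw : w ≠ 0) (c : ℝ) {t : ℝ} (h : t - c ≠ 0) :
    HasDerivAt (fun t : ℝ => ((t - c : ℝ) : ℂ) ^ w) (w * ((t - c : ℝ) : ℂ) ^ (w - 1)) t := by
  have h1 := RL_hasDerivAt_ofReal_cpow' w hw h
  have h2 : HasDerivAt (fun t : ℝ => t - c) 1 t := (hasDerivAt_id t).sub_const c
  have := HasDerivAt.scomp (𝕜 := ℝ) t h1 h2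
  simpa [Function.comp_def] using this

lemma RL_hasDerivAt_one_sub_cpow (w : ℂ) (hw : w ≠ 0) {s : ℝ} (h : 1 - s ≠ 0) :
    HasDerivAt (fun s : ℝ => ((1 - s : ℝ) : ℂ) ^ w) (-(w * ((1 - s : ℝ) : ℂ) ^ (w - 1))) s := by
  have h1 := RL_hasDerivAt_ofReal_cpow' w hw h
  have h2 : HasDerivAt (fun s : ℝ => 1 - s) (-1) s := by
    simpa using (hasDerivAt_id s).const_sub 1
  have := HasDerivAt.scomp (𝕜 := ℝ) s h1 h2
  simpa [Function.comp_def] using this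


lemma RL_II (ν : ℂ) (hν : -1 < ν.re) {ψ : ℝ → ℂ} (hψ : ContinuousOn ψ (Set.Icc 0 1)) :
    IntervalIntegrable (fun s => ((1 - s : ℝ) : ℂ) ^ ν * ψ s) volume 0 1 := by
  have h1 : IntervalIntegrable (fun s : ℝ => (s : ℂ) ^ ν) volume 0 1 :=
    intervalIntegral.intervalIntegrable_cpow' hν
  have h2 := (h1.comp_sub_left 1).symm
  simp only [sub_zero, sub_self] at h2
  have h2' : IntervalIntegrable (fun s : ℝ => ((1 - s : ℝ) : ℂ) ^ ν) volume 0 1 := by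
    simpa using h2
  exact h2'.mul_continuousOn (by rwa [Set.uIcc_of_le (by norm_num : (0:ℝ) ≤ 1)])

lemma RL_meas_help {g : ℝ → ℂ} (hg : ContinuousOn g (Set.Ioo 0 1)) :
    AEStronglyMeasurable g (volume.restrict (Set.uIoc (0:ℝ) 1)) := by
  rw [Set.uIoc_of_le (by norm_num : (0:ℝ) ≤ 1),
    ← MeasureTheory.Measure.restrict_congr_set MeasureTheory.Ioo_ae_eq_Ioc]
  exact hg.aestronglyMeasurable measurableSet_Ioo

lemma RL_subst (ν : ℂ) (g : ℝ → ℂ) {c t : ℝ} (h : c < t) :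
    ∫ y in c..t, ((t - y : ℝ) : ℂ) ^ ν * g y
      = ((t - c : ℝ) : ℂ) ^ (ν + 1) *
          ∫ s in (0:ℝ)..1, ((1 - s : ℝ) : ℂ) ^ ν * g (c + s * (t - c)) := by
  have h0 : (0:ℝ) < t - c := by linarith
  have hne : t - c ≠ 0 := ne_of_gt h0
  have hcv := intervalIntegral.integral_comp_mul_add (a := 0) (b := 1)
      (f := fun y => ((t - y : ℝ) : ℂ) ^ ν * g y) hne c
  -- hcv : ∫ s in 0..1, F ((t-c) * s + c) = (t-c)⁻¹ • ∫ y in (t-c)*0+c..(t-c)*1+c, F y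
  rw [mul_zero, zero_add, mul_one, sub_add_cancel] at hcv
  have key : ∀ s ∈ Set.uIcc (0:ℝ) 1,
      ((t - ((t - c) * s + c) : ℝ) : ℂ) ^ ν * g ((t - c) * s + c)
        = ((t - c : ℝ) : ℂ) ^ ν * (((1 - s : ℝ) : ℂ) ^ ν * g (c + s * (t - c))) := by
    intro s hs
    rw [Set.uIcc_of_le (by norm_num : (0:ℝ) ≤ 1)] at hs
    have e1 : t - ((t - c) * s + c) = (t - c) * (1 - s) := by ring
    have e2 : (t - c) * s + c = c + s * (t - c) := by ring
    rw [e1, e2, Complex.ofReal_mul,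
      mul_cpow_ofReal_nonneg (le_of_lt h0) (by linarith [hs.2]), mul_assoc]
  rw [intervalIntegral.integral_congr key, intervalIntegral.integral_const_mul] at hcv
  -- hcv : (t-c)^ν * ∫ ... = (t-c)⁻¹ • ∫ y in c..t, (t-y)^ν g y
  have h3 : ((t - c : ℝ) : ℂ) ≠ 0 := Complex.ofReal_ne_zero.mpr hne
  rw [Complex.real_smul, Complex.ofReal_inv, eq_comm,
    inv_mul_eq_iff_eq_mul₀ h3] at hcv
  rw [hcv, cpow_add _ _ h3, cpow_one]
  ring


lemma RL_ibp (b : ℂ) (hb : 0 < b.re) (φ φ' : ℝ → ℂ)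
    (hφ : ContinuousOn φ (Set.Icc 0 1)) (hφ' : ContinuousOn φ' (Set.Icc 0 1))
    (hd : ∀ s ∈ Set.Ioo (0:ℝ) 1, HasDerivAt φ (φ' s) s) :
    b * ∫ s in (0:ℝ)..1, ((1 - s : ℝ) : ℂ) ^ (b - 1) * φ s
      = φ 0 + ∫ s in (0:ℝ)..1, ((1 - s : ℝ) : ℂ) ^ b * φ' s := by
  have hb0 : b ≠ 0 := fun h => by simp [h] at hb
  set P : ℝ → ℂ := fun s => ((1 - s : ℝ) : ℂ) ^ b * φ s with hP
  set P' : ℝ → ℂ := fun s =>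
    (-b) * (((1 - s : ℝ) : ℂ) ^ (b - 1) * φ s) + ((1 - s : ℝ) : ℂ) ^ b * φ' s with hP'
  have hint1 : IntervalIntegrable (fun s => ((1 - s : ℝ) : ℂ) ^ (b - 1) * φ s) volume 0 1 :=
    RL_II _ (by simp; linarith) hφ
  have hint2 : IntervalIntegrable (fun s => ((1 - s : ℝ) : ℂ) ^ b * φ' s) volume 0 1 :=
    RL_II _ (by linarith) hφ'
  have hPcont : ContinuousOn P (Set.Icc 0 1) := by
    apply ContinuousOn.mul _ hφ
    exact ((Complex.continuous_ofReal_cpow_const hb).comp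
      (continuous_const.sub continuous_id)).continuousOn
  have hPderiv : ∀ s ∈ Set.Ioo (0:ℝ) 1, HasDerivWithinAt P (P' s) (Set.Ioi s) s := by
    intro s hs
    have h1 := RL_hasDerivAt_one_sub_cpow b hb0 (by have := hs.2; intro hcon; linarith
      : (1:ℝ) - s ≠ 0)
    have := h1.mul (hd s hs)
    refine HasDerivAt.hasDerivWithinAt ?_
    refine this.congr_deriv (Eq.symm ?_)
    simp only [hP']
    ring
  have hPint : IntervalIntegrable P' volume 0 1 := (hint1.const_mul (-b)).add hint2
  have hftc := intervalIntegral.integral_eq_sub_of_hasDeriv_right_of_le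
    (by norm_num : (0:ℝ) ≤ 1) hPcont hPderiv hPint
  have hP1 : P 1 = 0 := by
    simp only [hP]
    norm_num [Complex.zero_cpow hb0]
  have hP0 : P 0 = φ 0 := by simp [hP]
  rw [hP1, hP0, intervalIntegral.integral_add (hint1.const_mul (-b)) hint2,
    intervalIntegral.integral_const_mul] at hftc
  linear_combination -hftc


lemma RL_contOn_one_sub_cpow (ν : ℂ) :
    ContinuousOn (fun s : ℝ => ((1 - s : ℝ) : ℂ) ^ ν) (Set.Ioo 0 1) := by
  intro s hs
  have h1 : ContinuousAt (fun a : ℝ => (a : ℂ) ^ ν) (1 - s) :=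
    Complex.continuousAt_ofReal_cpow_const _ _ (Or.inr (sub_ne_zero_of_ne (ne_of_gt hs.2)))
  exact (h1.comp ((continuous_const.sub continuous_id).continuousAt)).continuousWithinAt

lemma RL_affine_mapsTo {c t : ℝ} (ht : c ≤ t) {s : ℝ} (hs : s ∈ Set.Icc (0:ℝ) 1) :
    c + s * (t - c) ∈ Set.Ici c := by
  have h1 : 0 ≤ s * (t - c) := mul_nonneg hs.1 (by linarith)
  simp only [Set.mem_Ici]; linarith

lemma RL_affine_cont {c t : ℝ} (ht : c ≤ t) {g : ℝ → ℂ} (hg : ContinuousOn g (Set.Ici c)) :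
    ContinuousOn (fun s : ℝ => g (c + s * (t - c))) (Set.Icc 0 1) :=
  hg.comp (Continuous.continuousOn (by continuity)) (fun s hs => RL_affine_mapsTo ht hs)

lemma RL_keyDeriv (b : ℂ) (hb : 0 < b.re) (c : ℝ) (f f' : ℝ → ℂ)
    (hf : ContinuousOn f (Set.Ici c)) (hf' : ContinuousOn f' (Set.Ici c))
    (hd : ∀ y, c < y → HasDerivAt f (f' y) y) {x : ℝ} (hx : c < x) :
    HasDerivAt (fun t => ∫ y in c..t, ((t - y : ℝ) : ℂ) ^ (b - 1) * f y)
      (((x - c : ℝ) : ℂ) ^ (b - 1) * f c + ∫ y in c..x, ((x - y : ℝ) : ℂ) ^ (b - 1) * f' y)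
      x := by
  have hb0 : b ≠ 0 := fun h => by simp [h] at hb
  have hb1 : -1 < (b - 1).re := by simp [Complex.sub_re]; linarith
  set ε : ℝ := (x - c) / 2 with hεdef
  have hε : 0 < ε := by simp only [hεdef]; linarith
  obtain ⟨M, hM⟩ := IsCompact.exists_bound_of_continuousOn (isCompact_Icc (a := c) (b := x + ε))
    (hf'.mono (fun y hy => hy.1))
  have hM0 : 0 ≤ M := le_trans (norm_nonneg (f' c)) (hM c ⟨le_refl c, by linarith⟩)
  -- the parametrized integral
  set Q : ℝ → ℂ := fun t => ∫ s in (0:ℝ)..1, ((1 - s : ℝ) : ℂ) ^ (b - 1) * f (c + s * (t - c))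
    with hQdef
  set Q'x : ℂ := ∫ s in (0:ℝ)..1, ((1 - s : ℝ) : ℂ) ^ (b - 1) * ((s : ℂ) * f' (c + s * (x - c)))
    with hQ'def
  have ballsub : ∀ t ∈ ball x ε, c < t ∧ t ≤ x + ε := by
    intro t ht
    rw [mem_ball, Real.dist_eq, abs_lt] at ht
    constructor <;> [simp only [hεdef] at ht ⊢; skip] <;> [linarith [ht.1]; linarith [ht.2]]
  have hQd : HasDerivAt Q Q'x x := by
    have key := (intervalIntegral.hasDerivAt_integral_of_dominated_loc_of_deriv_le
      (μ := volume) (a := 0) (b := 1) (x₀ := x)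
      (F := fun t s => ((1 - s : ℝ) : ℂ) ^ (b - 1) * f (c + s * (t - c)))
      (F' := fun t s => ((1 - s : ℝ) : ℂ) ^ (b - 1) * ((s : ℂ) * f' (c + s * (t - c))))
      (bound := fun s => (1 - s) ^ (b.re - 1) * M)
      (ball_mem_nhds x hε) ?_ ?_ ?_ ?_ ?_ ?_).2
    · exact key
    · -- hF_meas
      filter_upwards [Ioi_mem_nhds hx] with t ht
      apply RL_meas_help
      exact (RL_contOn_one_sub_cpow (b-1)).mul
        ((RL_affine_cont (le_of_lt ht) hf).mono Set.Ioo_subset_Icc_self)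
    · -- hF_int
      exact RL_II (b-1) hb1 (RL_affine_cont (le_of_lt hx) hf)
    · -- hF'_meas
      apply RL_meas_help
      refine (RL_contOn_one_sub_cpow (b-1)).mul (ContinuousOn.mul ?_ ?_)
      · exact Complex.continuous_ofReal.continuousOn
      · exact (RL_affine_cont (le_of_lt hx) hf').mono Set.Ioo_subset_Icc_self
    · -- h_bound
      have hae : ∀ᵐ s : ℝ ∂volume, s ≠ (1:ℝ) := by
        simp only [ae_iff, not_not, Set.setOf_eq_eq_singleton]
        exact measure_singleton 1
      filter_upwards [hae] with s hs1 hmem t ht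
      rw [Set.uIoc_of_le (by norm_num : (0:ℝ) ≤ 1)] at hmem
      have hs0 : 0 < s := hmem.1
      have hslt : s < 1 := lt_of_le_of_ne hmem.2 hs1
      obtain ⟨htc, htx⟩ := ballsub t ht
      have hpt : c + s * (t - c) ∈ Set.Icc c (x + ε) := by
        constructor
        · nlinarith
        · nlinarith
      rw [norm_mul, norm_mul, Complex.norm_cpow_eq_rpow_re_of_pos (by linarith)]
      have h1 : ‖(s:ℂ)‖ * ‖f' (c + s * (t - c))‖ ≤ M := by
        have h2 := hM _ hpt
        rw [Complex.norm_real, Real.norm_eq_abs, abs_of_pos hs0]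
        nlinarith [norm_nonneg (f' (c + s * (t - c)))]
      have h3 : (0:ℝ) ≤ (1 - s) ^ (b - 1).re := Real.rpow_nonneg (by linarith) _
      have h4 : (b - 1).re = b.re - 1 := by simp [Complex.sub_re]
      rw [h4] at h3 ⊢
      exact mul_le_mul_of_nonneg_left h1 h3
    · -- bound_integrable
      have h1 : IntervalIntegrable (fun s : ℝ => s ^ (b.re - 1)) volume 0 1 :=
        intervalIntegral.intervalIntegrable_rpow' (by linarith)
      have h2 := (h1.comp_sub_left 1).symm
      simp only [sub_zero, sub_self] at h2
      exact h2.mul_const M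
    · -- h_diff
      refine MeasureTheory.ae_of_all _ ?_
      intro s hmem t ht
      rw [Set.uIoc_of_le (by norm_num : (0:ℝ) ≤ 1)] at hmem
      have hs0 : 0 < s := hmem.1
      obtain ⟨htc, _⟩ := ballsub t ht
      have hptc : c < c + s * (t - c) := by nlinarith
      have hinner : HasDerivAt (fun t : ℝ => c + s * (t - c)) s t := by
        have h5 : HasDerivAt (fun t : ℝ => c + s * (t - c)) (s * 1) t :=
          (((hasDerivAt_id t).sub_const c).const_mul s).const_add c
        simpa using h5
      have houter := hd _ hptc
      have hcomp := HasDerivAt.scomp (𝕜 := ℝ) t houter hinner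
      have := hcomp.const_mul (((1 - s : ℝ) : ℂ) ^ (b - 1))
      exact this.congr_deriv (by rw [Complex.real_smul])
  -- now assemble
  have hxc : (0:ℝ) < x - c := by linarith
  have hxc0 : ((x - c : ℝ) : ℂ) ≠ 0 := Complex.ofReal_ne_zero.mpr (ne_of_gt hxc)
  have hpowid : ((x - c : ℝ) : ℂ) ^ (b - 1) * ((x - c : ℝ) : ℂ) = ((x - c : ℝ) : ℂ) ^ b := by
    have h6 := Complex.cpow_add (b - 1) 1 hxc0
    rw [sub_add_cancel, Complex.cpow_one] at h6
    exact h6.symm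
  have hsplit : Q'x = (∫ s in (0:ℝ)..1, ((1 - s : ℝ) : ℂ) ^ (b - 1) * f' (c + s * (x - c)))
      - ∫ s in (0:ℝ)..1, ((1 - s : ℝ) : ℂ) ^ b * f' (c + s * (x - c)) := by
    rw [hQ'def, ← intervalIntegral.integral_sub
      (RL_II (b-1) hb1 (RL_affine_cont (le_of_lt hx) hf'))
      (RL_II b (by linarith) (RL_affine_cont (le_of_lt hx) hf'))]
    apply intervalIntegral.integral_congr
    intro s hs
    rw [Set.uIcc_of_le (by norm_num : (0:ℝ) ≤ 1)] at hs
    rcases eq_or_lt_of_le hs.2 with h1 | h1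
    · rw [h1]
      norm_num [Complex.zero_cpow hb0]
    · have hz : ((1 - s : ℝ) : ℂ) ≠ 0 := Complex.ofReal_ne_zero.mpr (by linarith)
      have hcp := Complex.cpow_add (b - 1) 1 hz
      rw [sub_add_cancel, Complex.cpow_one] at hcp
      simp only [hcp]
      push_cast
      ring
  -- integration by parts identity
  have hφ'cont : ContinuousOn (fun s : ℝ => ((x - c : ℝ) : ℂ) * f' (c + s * (x - c)))
      (Set.Icc 0 1) := continuousOn_const.mul (RL_affine_cont (le_of_lt hx) hf')
  have hφd : ∀ s ∈ Set.Ioo (0:ℝ) 1, HasDerivAt (fun s : ℝ => f (c + s * (x - c)))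
      (((x - c : ℝ) : ℂ) * f' (c + s * (x - c))) s := by
    intro s hs
    have hptc : c < c + s * (x - c) := by nlinarith [hs.1]
    have hinner : HasDerivAt (fun s : ℝ => c + s * (x - c)) (x - c) s := by
      have h5 : HasDerivAt (fun s : ℝ => c + s * (x - c)) (1 * (x - c)) s :=
        ((hasDerivAt_id s).mul_const (x - c)).const_add c
      simpa using h5
    have h7 := HasDerivAt.scomp (𝕜 := ℝ) s (hd _ hptc) hinner
    exact h7.congr_deriv Complex.real_smul
  have hibp := RL_ibp b hb (fun s => f (c + s * (x - c)))
    (fun s => ((x - c : ℝ) : ℂ) * f' (c + s * (x - c)))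
    (RL_affine_cont (le_of_lt hx) hf) hφ'cont hφd
  have hconst : (∫ s in (0:ℝ)..1, ((1 - s : ℝ) : ℂ) ^ b * (((x - c : ℝ) : ℂ) * f' (c + s * (x - c))))
      = ((x - c : ℝ) : ℂ) * ∫ s in (0:ℝ)..1, ((1 - s : ℝ) : ℂ) ^ b * f' (c + s * (x - c)) := by
    rw [← intervalIntegral.integral_const_mul]
    apply intervalIntegral.integral_congr
    intro s hs
    ring
  rw [hconst] at hibp
  have hφ0 : (fun s : ℝ => f (c + s * (x - c))) 0 = f c := by norm_num
  simp only [zero_mul, add_zero] at hibp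
  -- hibp : b * Q x = f c + (x-c) * R1  (after beta)
  have hQeq : b * Q x = f c + ((x - c : ℝ) : ℂ) *
      ∫ s in (0:ℝ)..1, ((1 - s : ℝ) : ℂ) ^ b * f' (c + s * (x - c)) := hibp
  -- substitution for the RHS integral
  have hR0eq : (∫ y in c..x, ((x - y : ℝ) : ℂ) ^ (b - 1) * f' y)
      = ((x - c : ℝ) : ℂ) ^ b *
        ∫ s in (0:ℝ)..1, ((1 - s : ℝ) : ℂ) ^ (b - 1) * f' (c + s * (x - c)) := by
    rw [RL_subst (b-1) f' hx, sub_add_cancel]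
  -- derivative of t ↦ (t-c)^b * Q t
  have hfinal := (RL_hasDerivAt_sub_const_cpow b hb0 c (ne_of_gt hxc)).mul hQd
  have heq : (fun t => ∫ y in c..t, ((t - y : ℝ) : ℂ) ^ (b - 1) * f y)
      =ᶠ[𝓝 x] (fun t => ((t - c : ℝ) : ℂ) ^ b * Q t) := by
    filter_upwards [Ioi_mem_nhds hx] with t ht
    rw [RL_subst (b-1) f ht, sub_add_cancel]
  have hfinal2 := hfinal.congr_of_eventuallyEq heq
  refine hfinal2.congr_deriv (Eq.symm ?_)
  rw [hR0eq, hsplit]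
  linear_combination (-(((x - c : ℝ) : ℂ) ^ (b - 1))) * hQeq
    - (∫ s in (0:ℝ)..1, ((1 - s : ℝ) : ℂ) ^ b * f' (c + s * (x - c))) * hpowid


lemma RL_coeff (z : ℂ) : z / Complex.Gamma (z + 1) = 1 / Complex.Gamma z := by
  rcases eq_or_ne z 0 with rfl | hz
  · simp [Complex.Gamma_zero]
  · rw [Complex.Gamma_add_one z hz]
    by_cases hg : Complex.Gamma z = 0
    · simp [hg]
    · field_simp

lemma RL_cpow_term (w : ℂ) (c : ℝ) {x : ℝ} (hx : c < x) :
    HasDerivAt (fun t : ℝ => ((t - c : ℝ) : ℂ) ^ w) (w * ((x - c : ℝ) : ℂ) ^ (w - 1)) x := by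
  rcases eq_or_ne w 0 with rfl | hw
  · simp only [Complex.cpow_zero, zero_mul]
    exact hasDerivAt_const x 1
  · exact RL_hasDerivAt_sub_const_cpow w hw c (ne_of_gt (by linarith))

lemma RL_step (c : ℝ) (f : ℝ → ℂ) {n m : ℕ} (hm : m < n) (hf : ContDiffOn ℝ n f (Set.Ici c)) :
    ContinuousOn (iteratedDerivWithin m f (Set.Ici c)) (Set.Ici c) ∧
    ContinuousOn (iteratedDerivWithin (m+1) f (Set.Ici c)) (Set.Ici c) ∧
    ∀ y, c < y → HasDerivAt (iteratedDerivWithin m f (Set.Ici c))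
        (iteratedDerivWithin (m+1) f (Set.Ici c) y) y := by
  have uD := uniqueDiffOn_Ici c
  refine ⟨hf.continuousOn_iteratedDerivWithin (by exact_mod_cast hm.le) uD,
    hf.continuousOn_iteratedDerivWithin (by exact_mod_cast hm) uD, ?_⟩
  intro y hy
  have hdiff := hf.differentiableOn_iteratedDerivWithin (by exact_mod_cast hm) uD
  have h1 := ((hdiff y (le_of_lt hy)).hasDerivWithinAt).hasDerivAt (Ici_mem_nhds hy)
  rw [iteratedDerivWithin_succ]
  exact h1

end RLaux

section RLmain
open Set Filter Topology Metric

/-- Composition of an integer-order derivative with a Riemann–Liouville fractional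
integral: `D_{c+}^n (D_{c+}^μ f)(x) = D_{c+}^μ (D_{c+}^n f)(x)
+ Σ_{k=1}^n ((x-c)^{-μ-k}/Γ(-μ-k+1)) f^{(n-k)}(c)` for `Re μ < 0`, `x > c`,
and `f` n-times continuously differentiable on `[c, ∞)`. -/
theorem rl_deriv_composition (c : ℝ) (n : ℕ) (hn : 1 ≤ n) (μ : ℂ) (hμ : μ.re < 0)
    (f : ℝ → ℂ) (hf : ContDiffOn ℝ n f (Set.Ici c)) (x : ℝ) (hx : c < x) :
    iteratedDeriv n
        (fun t : ℝ => (1 / Complex.Gamma (-μ)) *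
          ∫ y in c..t, ((t - y : ℝ) : ℂ) ^ (-μ - 1) * f y) x =
      (1 / Complex.Gamma (-μ)) *
          (∫ y in c..x, ((x - y : ℝ) : ℂ) ^ (-μ - 1) *
            iteratedDerivWithin n f (Set.Ici c) y) +
        ∑ k ∈ Finset.Icc 1 n,
          (((x - c : ℝ) : ℂ) ^ (-μ - (k : ℂ)) / Complex.Gamma (-μ - (k : ℂ) + 1)) *
            iteratedDerivWithin (n - k) f (Set.Ici c) c := by
  have hb : 0 < (-μ).re := by simp only [Complex.neg_re]; linarith
  induction n, hn using Nat.le_induction generalizing x with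
  | base =>
    obtain ⟨h0c, h1c, hdd⟩ := RL_step c f (by norm_num : 0 < 1) hf
    simp only [iteratedDerivWithin_zero] at h0c hdd
    rw [iteratedDeriv_one]
    have hkey := RL_keyDeriv (-μ) hb c f (iteratedDerivWithin 1 f (Set.Ici c)) h0c h1c hdd hx
    have hder : HasDerivAt
        (fun t : ℝ => (1 / Complex.Gamma (-μ)) *
          ∫ y in c..t, ((t - y : ℝ) : ℂ) ^ (-μ - 1) * f y)
        ((1 / Complex.Gamma (-μ)) * (((x - c : ℝ) : ℂ) ^ (-μ - 1) * f c +
          ∫ y in c..x, ((x - y : ℝ) : ℂ) ^ (-μ - 1) *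
            iteratedDerivWithin 1 f (Set.Ici c) y)) x := hkey.const_mul _
    rw [hder.deriv]
    rw [show Finset.Icc 1 1 = {1} from Finset.Icc_self 1, Finset.sum_singleton]
    simp only [Nat.cast_one, Nat.sub_self, iteratedDerivWithin_zero]
    rw [show -μ - 1 + 1 = -μ from by ring]
    ring
  | succ n hn1 IH =>
    have hfn : ContDiffOn ℝ n f (Set.Ici c) := hf.of_le (by exact_mod_cast Nat.le_succ n)
    obtain ⟨hnc, hn1c, hdd⟩ := RL_step c f (Nat.lt_succ_self n) hf
    rw [iteratedDeriv_succ]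
    have hev : iteratedDeriv n (fun t : ℝ => (1 / Complex.Gamma (-μ)) *
          ∫ y in c..t, ((t - y : ℝ) : ℂ) ^ (-μ - 1) * f y)
        =ᶠ[𝓝 x] (fun t : ℝ => (1 / Complex.Gamma (-μ)) *
          (∫ y in c..t, ((t - y : ℝ) : ℂ) ^ (-μ - 1) *
            iteratedDerivWithin n f (Set.Ici c) y) +
        ∑ k ∈ Finset.Icc 1 n,
          (((t - c : ℝ) : ℂ) ^ (-μ - (k : ℂ)) / Complex.Gamma (-μ - (k : ℂ) + 1)) *
            iteratedDerivWithin (n - k) f (Set.Ici c) c) := by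
      filter_upwards [Ioi_mem_nhds hx] with t ht
      exact IH hfn t ht
    rw [hev.deriv_eq]
    have h1 : HasDerivAt (fun t : ℝ => (1 / Complex.Gamma (-μ)) *
          (∫ y in c..t, ((t - y : ℝ) : ℂ) ^ (-μ - 1) *
            iteratedDerivWithin n f (Set.Ici c) y))
        ((1 / Complex.Gamma (-μ)) * (((x - c : ℝ) : ℂ) ^ (-μ - 1) *
            iteratedDerivWithin n f (Set.Ici c) c +
          ∫ y in c..x, ((x - y : ℝ) : ℂ) ^ (-μ - 1) *
            iteratedDerivWithin (n+1) f (Set.Ici c) y)) x :=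
      (RL_keyDeriv (-μ) hb c _ _ hnc hn1c hdd hx).const_mul _
    have h2 : HasDerivAt (fun t : ℝ => ∑ k ∈ Finset.Icc 1 n,
          (((t - c : ℝ) : ℂ) ^ (-μ - (k : ℂ)) / Complex.Gamma (-μ - (k : ℂ) + 1)) *
            iteratedDerivWithin (n - k) f (Set.Ici c) c)
        (∑ k ∈ Finset.Icc 1 n,
          (((-μ - (k : ℂ)) * ((x - c : ℝ) : ℂ) ^ (-μ - (k : ℂ) - 1)) /
              Complex.Gamma (-μ - (k : ℂ) + 1)) *
            iteratedDerivWithin (n - k) f (Set.Ici c) c) x := by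
      apply HasDerivAt.fun_sum
      intro k hk
      exact ((RL_cpow_term (-μ - (k : ℂ)) c hx).div_const _).mul_const _
    have hsum : HasDerivAt (fun t : ℝ => (1 / Complex.Gamma (-μ)) *
          (∫ y in c..t, ((t - y : ℝ) : ℂ) ^ (-μ - 1) *
            iteratedDerivWithin n f (Set.Ici c) y) +
        ∑ k ∈ Finset.Icc 1 n,
          (((t - c : ℝ) : ℂ) ^ (-μ - (k : ℂ)) / Complex.Gamma (-μ - (k : ℂ) + 1)) *
            iteratedDerivWithin (n - k) f (Set.Ici c) c)
        ((1 / Complex.Gamma (-μ)) * (((x - c : ℝ) : ℂ) ^ (-μ - 1) *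
            iteratedDerivWithin n f (Set.Ici c) c +
          ∫ y in c..x, ((x - y : ℝ) : ℂ) ^ (-μ - 1) *
            iteratedDerivWithin (n+1) f (Set.Ici c) y) +
        ∑ k ∈ Finset.Icc 1 n,
          (((-μ - (k : ℂ)) * ((x - c : ℝ) : ℂ) ^ (-μ - (k : ℂ) - 1)) /
              Complex.Gamma (-μ - (k : ℂ) + 1)) *
            iteratedDerivWithin (n - k) f (Set.Ici c) c) x := h1.add h2
    rw [hsum.deriv]
    -- reindex the RHS sum
    have hins : Finset.Icc 1 (n+1) = insert 1 (Finset.Icc 2 (n+1)) := by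
      ext a; simp only [Finset.mem_Icc, Finset.mem_insert]; omega
    have hmap : Finset.Icc 2 (n+1)
        = Finset.map (addRightEmbedding 1) (Finset.Icc 1 n) := by
      rw [Finset.map_add_right_Icc]
    rw [hins, Finset.sum_insert (by simp), hmap, Finset.sum_map]
    simp only [addRightEmbedding_apply]
    have hterm : ∀ k ∈ Finset.Icc 1 n,
        (((-μ - (k : ℂ)) * ((x - c : ℝ) : ℂ) ^ (-μ - (k : ℂ) - 1)) /
            Complex.Gamma (-μ - (k : ℂ) + 1)) *
          iteratedDerivWithin (n - k) f (Set.Ici c) c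
        = (((x - c : ℝ) : ℂ) ^ (-μ - ((k + 1 : ℕ) : ℂ)) /
            Complex.Gamma (-μ - ((k + 1 : ℕ) : ℂ) + 1)) *
          iteratedDerivWithin (n + 1 - (k + 1)) f (Set.Ici c) c := by
      intro k hk
      have e3 : n + 1 - (k + 1) = n - k := by omega
      rw [show -μ - ((k + 1 : ℕ) : ℂ) + 1 = -μ - (k : ℂ) from by push_cast; ring,
        show -μ - ((k + 1 : ℕ) : ℂ) = -μ - (k : ℂ) - 1 from by push_cast; ring, e3]
      linear_combination (((x - c : ℝ) : ℂ) ^ (-μ - (k : ℂ) - 1) *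
        iteratedDerivWithin (n - k) f (Set.Ici c) c) * RL_coeff (-μ - (k : ℂ))
    rw [Finset.sum_congr rfl hterm]
    simp only [Nat.cast_one, Nat.add_sub_cancel]
    rw [show -μ - 1 + 1 = -μ from by ring]
    ring

end RLmain
end

section
/- Let ν ∈ ℂ with Re ν < 0, let f : ℝ → ℂ be measurable and bounded on [0, ∞), and let λ ∈ ℂ with Im λ > 0. Then ∫_0^∞ e^{iλx} · ((1/Γ(−ν)) ∫_0^x (x−y)^{−ν−1} f(y) dy) dx = (−iλ)^ν · ∫_0^∞ e^{iλx} f(x) dx, where (−iλ)^ν is the principal branch of the complex power. (Equivalently: the Laplace-type transform of the Riemann–Liouville fractional integral D_{0+}^ν f is (−iλ)^ν times the transform of f.) -/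
open MeasureTheory intervalIntegral Complex



lemma aux_real_int {p c : ℝ} (hp : -1 < p) (hc : 0 < c) :
    IntegrableOn (fun t : ℝ => t ^ p * Real.exp (-(c * t))) (Set.Ioi 0) := by
  have h1 : IntegrableOn (fun x : ℝ => Real.exp (-x) * x ^ p) (Set.Ioi 0) := by
    simpa using Real.GammaIntegral_convergent (s := p + 1) (by linarith)
  have h2 : IntegrableOn (fun x : ℝ => Real.exp (-(c * x)) * (c * x) ^ p) (Set.Ioi 0) := by
    have := (integrableOn_Ioi_comp_mul_left_iff
      (fun x : ℝ => Real.exp (-x) * x ^ p) 0 hc).mpr (by simpa using h1)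
    simpa using this
  have h3 : IntegrableOn (fun x : ℝ => c ^ (-p) * (Real.exp (-(c * x)) * (c * x) ^ p))
      (Set.Ioi 0) := h2.const_mul _
  apply h3.congr_fun ?_ measurableSet_Ioi
  intro x hx
  have hx' : (0:ℝ) < x := hx
  simp only [Real.mul_rpow hc.le hx'.le, Real.rpow_neg hc.le]
  field_simp

lemma aux_asm (w b : ℂ) : AEStronglyMeasurable (fun t : ℝ => (t:ℂ) ^ w * Complex.exp (-(b * t)))
    (volume.restrict (Set.Ioi 0)) := by
  refine ContinuousOn.aestronglyMeasurable (ContinuousOn.mul ?_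
    ((continuous_const.mul Complex.continuous_ofReal).neg.cexp.continuousOn)) measurableSet_Ioi
  intro x hx
  exact (Complex.continuousAt_ofReal_cpow_const x w (Or.inr (ne_of_gt hx))).continuousWithinAt

lemma aux_norm {t : ℝ} (ht : 0 < t) (w b : ℂ) :
    ‖(t:ℂ) ^ w * Complex.exp (-(b * t))‖ = t ^ w.re * Real.exp (-(b.re * t)) := by
  rw [norm_mul, Complex.norm_exp,
    Complex.norm_cpow_eq_rpow_re_of_pos ht]
  congr 1
  simp [Complex.neg_re, Complex.mul_re]

lemma aux_cint {s b : ℂ} (hs : 0 < s.re) (hb : 0 < b.re) :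
    IntegrableOn (fun t : ℝ => (t:ℂ) ^ (s - 1) * Complex.exp (-(b * t))) (Set.Ioi 0) := by
  refine Integrable.mono' (g := fun t : ℝ => t ^ (s.re - 1) * Real.exp (-(b.re * t)))
    (aux_real_int (by linarith) hb) (aux_asm _ _) ?_
  rw [ae_restrict_iff' measurableSet_Ioi]
  filter_upwards with t ht
  rw [aux_norm ht]
  simp

set_option maxHeartbeats 1000000 in
lemma aux_diffat {s : ℂ} (hs : 0 < s.re) {b₀ : ℂ} (hb₀ : 0 < b₀.re) :
    DifferentiableAt ℂ
      (fun b => ∫ t in Set.Ioi (0:ℝ), (t:ℂ) ^ (s - 1) * Complex.exp (-(b * t))) b₀ := by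
  have hεpos : 0 < b₀.re / 2 := by positivity
  have hmeas : ∀ᶠ b in nhds b₀, AEStronglyMeasurable
      (fun t : ℝ => (t:ℂ) ^ (s - 1) * Complex.exp (-(b * t))) (volume.restrict (Set.Ioi 0)) :=
    Filter.Eventually.of_forall fun b => aux_asm _ _
  have hF'meas : AEStronglyMeasurable
      (fun t : ℝ => (t:ℂ) ^ (s - 1) * (Complex.exp (-(b₀ * t)) * (-(t:ℂ))))
      (volume.restrict (Set.Ioi 0)) := by
    have h := ((aux_asm (s - 1) b₀).mul
      ((Complex.continuous_ofReal.neg.aestronglyMeasurable).restrict))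
    have he : (fun t : ℝ => (t:ℂ) ^ (s - 1) * (Complex.exp (-(b₀ * t)) * (-(t:ℂ))))
        = fun t : ℝ => ((t:ℂ) ^ (s - 1) * Complex.exp (-(b₀ * t))) * (-(t:ℂ)) := by
      funext t; ring
    rw [he]
    exact h
  have hbound : ∀ᵐ (t : ℝ) ∂(volume.restrict (Set.Ioi (0:ℝ))), ∀ b ∈ Metric.ball b₀ (b₀.re / 2),
      ‖(t:ℂ) ^ (s - 1) * (Complex.exp (-(b * t)) * (-(t:ℂ)))‖
        ≤ t ^ s.re * Real.exp (-(b₀.re / 2 * t)) := by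
    rw [ae_restrict_iff' measurableSet_Ioi]
    filter_upwards with t ht
    intro b hb
    have hbre : b₀.re / 2 ≤ b.re := by
      have h1 : |b.re - b₀.re| ≤ ‖b - b₀‖ := by
        simpa using Complex.abs_re_le_norm (b - b₀)
      have h2 : ‖b - b₀‖ < b₀.re / 2 := by simpa [Metric.mem_ball, dist_eq_norm] using hb
      have := abs_le.mp (h1.trans h2.le)
      linarith [this.1]
    have h3 : ‖(t:ℂ) ^ (s - 1) * (Complex.exp (-(b * t)) * (-(t:ℂ)))‖
        = t ^ (s.re - 1) * Real.exp (-(b.re * t)) * t := by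
      rw [show (t:ℂ) ^ (s - 1) * (Complex.exp (-(b * t)) * (-(t:ℂ)))
          = ((t:ℂ) ^ (s - 1) * Complex.exp (-(b * t))) * (-(t:ℂ)) by ring,
        norm_mul, aux_norm ht (s - 1) b, norm_neg,
        Complex.norm_of_nonneg ht.le, Complex.sub_re, Complex.one_re]
    rw [h3, show t ^ (s.re - 1) * Real.exp (-(b.re * t)) * t
        = t ^ (s.re - 1) * t ^ (1:ℝ) * Real.exp (-(b.re * t)) by rw [Real.rpow_one]; ring,
      ← Real.rpow_add ht, sub_add_cancel]
    have hexp : Real.exp (-(b.re * t)) ≤ Real.exp (-(b₀.re / 2 * t)) := by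
      apply Real.exp_le_exp.mpr
      have ht' : (0:ℝ) < t := ht
      nlinarith [mul_le_mul_of_nonneg_right hbre ht'.le]
    exact mul_le_mul_of_nonneg_left hexp (Real.rpow_pos_of_pos ht _).le
  have hbint : Integrable (fun t : ℝ => t ^ s.re * Real.exp (-(b₀.re / 2 * t)))
      (volume.restrict (Set.Ioi 0)) := aux_real_int (by linarith) hεpos
  have hdiff : ∀ᵐ (t : ℝ) ∂(volume.restrict (Set.Ioi (0:ℝ))), ∀ b ∈ Metric.ball b₀ (b₀.re / 2),
      HasDerivAt (fun b : ℂ => (t:ℂ) ^ (s - 1) * Complex.exp (-(b * t)))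
        ((t:ℂ) ^ (s - 1) * (Complex.exp (-(b * t)) * (-(t:ℂ)))) b := by
    filter_upwards with t
    intro b _
    have h1 : HasDerivAt (fun b : ℂ => -(b * (t:ℂ))) (-(t:ℂ)) b := by
      simpa using ((hasDerivAt_id b).mul_const (t:ℂ)).fun_neg
    exact (h1.cexp).const_mul _
  have hFint : Integrable (fun t : ℝ => (t:ℂ) ^ (s - 1) * Complex.exp (-(b₀ * t)))
      (volume.restrict (Set.Ioi 0)) := aux_cint hs hb₀
  have H := _root_.hasDerivAt_integral_of_dominated_loc_of_deriv_le
    (μ := volume.restrict (Set.Ioi 0))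
    (F := fun (b : ℂ) (t : ℝ) => (t:ℂ) ^ (s - 1) * Complex.exp (-(b * t)))
    (F' := fun (b : ℂ) (t : ℝ) => (t:ℂ) ^ (s - 1) * (Complex.exp (-(b * t)) * (-(t:ℂ))))
    (x₀ := b₀) (bound := fun t : ℝ => t ^ s.re * Real.exp (-(b₀.re / 2 * t)))
    (Metric.ball_mem_nhds b₀ hεpos) hmeas hFint hF'meas hbound hbint hdiff
  exact H.2.differentiableAt

lemma gamma_cpow {s : ℂ} (hs : 0 < s.re) {b : ℂ} (hb : 0 < b.re) :
    ∫ t in Set.Ioi (0:ℝ), (t:ℂ) ^ (s - 1) * Complex.exp (-(b * t))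
      = Complex.Gamma s * b ^ (-s) := by
  set U : Set ℂ := {z : ℂ | 0 < z.re} with hU
  have hUo : IsOpen U := isOpen_lt continuous_const Complex.continuous_re
  have hF : DifferentiableOn ℂ
      (fun b => ∫ t in Set.Ioi (0:ℝ), (t:ℂ) ^ (s - 1) * Complex.exp (-(b * t))) U :=
    fun b₀ hb₀ => (aux_diffat hs hb₀).differentiableWithinAt
  have hG : DifferentiableOn ℂ (fun b : ℂ => Complex.Gamma s * b ^ (-s)) U := by
    intro z hz
    exact ((differentiableAt_id.cpow (differentiableAt_const _)
      (Or.inl hz)).const_mul _).differentiableWithinAt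
  have h1U : (1:ℂ) ∈ U := by simp [hU]
  have hfreq : ∃ᶠ z in nhdsWithin (1:ℂ) {(1:ℂ)}ᶜ,
      (fun b => ∫ t in Set.Ioi (0:ℝ), (t:ℂ) ^ (s - 1) * Complex.exp (-(b * t))) z
        = (fun b : ℂ => Complex.Gamma s * b ^ (-s)) z := by
    have heqn : ∀ n : ℕ, (fun b => ∫ t in Set.Ioi (0:ℝ),
        (t:ℂ) ^ (s - 1) * Complex.exp (-(b * t)))
          (((1 + 1/(n+1) : ℝ)) : ℂ)
        = (fun b : ℂ => Complex.Gamma s * b ^ (-s)) (((1 + 1/(n+1) : ℝ)) : ℂ) := by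
      intro n
      have hr : (0:ℝ) < 1 + 1/(n+1) := by positivity
      have h := Complex.integral_cpow_mul_exp_neg_mul_Ioi (a := s) hs hr
      simp only []
      rw [h, Complex.cpow_neg, one_div, ← Complex.ofReal_inv, mul_comm]
      congr 1
      rw [Complex.ofReal_inv, Complex.inv_cpow]
      rw [Complex.arg_ofReal_of_nonneg hr.le]
      exact Real.pi_ne_zero.symm
    have htend : Filter.Tendsto (fun n : ℕ => (((1 + 1/(n+1) : ℝ)) : ℂ)) Filter.atTop
        (nhdsWithin (1:ℂ) {(1:ℂ)}ᶜ) := by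
      rw [tendsto_nhdsWithin_iff]
      constructor
      · have : Filter.Tendsto (fun n : ℕ => (1 + 1/(n+1) : ℝ)) Filter.atTop (nhds 1) := by
          have := tendsto_one_div_add_atTop_nhds_zero_nat (𝕜 := ℝ)
          simpa using (tendsto_const_nhds (x := (1:ℝ))).add this
        have h2 := (Complex.continuous_ofReal.tendsto 1).comp this
        simpa [Function.comp_def] using h2
      · filter_upwards with n
        simp only [Set.mem_compl_iff, Set.mem_singleton_iff]
        intro hcon
        have : (1 + 1/(n+1) : ℝ) = 1 := by exact_mod_cast hcon
        have hpos : (0:ℝ) < 1/(n+1) := by positivity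
        linarith
    exact htend.frequently (Filter.Frequently.of_forall heqn)
  have := (hF.analyticOnNhd hUo).eqOn_of_preconnected_of_frequently_eq
    (hG.analyticOnNhd hUo) (convex_halfSpace_re_gt 0).isPreconnected h1U hfreq
  exact this hb

set_option maxHeartbeats 1000000 in
/-- Laplace-type transform of the Riemann–Liouville fractional integral with
basepoint `0`: for `Re ν < 0`, `f` measurable and bounded on `[0, ∞)`, and
`Im λ > 0`, the transform of `D_{0+}^ν f` is `(-iλ)^ν f̃(λ)`. -/
theorem laplace_rl_integral (ν : ℂ) (hν : ν.re < 0) (f : ℝ → ℂ)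
    (hfm : Measurable f) (M : ℝ) (hfb : ∀ x : ℝ, 0 ≤ x → ‖f x‖ ≤ M)
    (l : ℂ) (hl : 0 < l.im) :
    ∫ x in Set.Ioi (0 : ℝ), Complex.exp (Complex.I * l * x) *
        ((1 / Complex.Gamma (-ν)) *
          ∫ y in (0 : ℝ)..x, ((x - y : ℝ) : ℂ) ^ (-ν - 1) * f y) =
      (-Complex.I * l) ^ ν *
        ∫ x in Set.Ioi (0 : ℝ), Complex.exp (Complex.I * l * x) * f x := by
  set g : ℝ → ℂ := fun t => (t:ℂ) ^ (-ν - 1) * Complex.exp (Complex.I * l * t) with hgdef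
  set h : ℝ → ℂ := fun y => Complex.exp (Complex.I * l * y) * f y with hhdef
  have hsre : 0 < (-ν).re := by simp only [Complex.neg_re]; linarith
  have hbre : 0 < (-Complex.I * l).re := by
    simp [Complex.mul_re, Complex.neg_re, Complex.I_re, Complex.I_im, hl]
  have hgeq : ∀ t : ℝ, g t = (t:ℂ) ^ (-ν - 1) * Complex.exp (-((-Complex.I * l) * t)) := by
    intro t
    rw [hgdef]
    ring_nf
  have hgint : IntegrableOn g (Set.Ioi 0) := by
    rw [show g = fun t : ℝ => (t:ℂ) ^ (-ν - 1) * Complex.exp (-((-Complex.I * l) * t))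
      from funext hgeq]
    exact aux_cint hsre hbre
  have hM : 0 ≤ M := le_trans (norm_nonneg (f 0)) (hfb 0 le_rfl)
  have hhint : IntegrableOn h (Set.Ioi 0) := by
    refine Integrable.mono' (g := fun y : ℝ => M * Real.exp (-l.im * y))
      ((exp_neg_integrableOn_Ioi 0 hl).const_mul M)
      (((measurable_const.mul Complex.measurable_ofReal).cexp.mul hfm).aestronglyMeasurable.restrict)
      ?_
    rw [ae_restrict_iff' measurableSet_Ioi]
    filter_upwards with y hy
    have h1 : ‖h y‖ = Real.exp (-l.im * y) * ‖f y‖ := by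
      rw [hhdef, norm_mul, Complex.norm_exp]
      congr 2
      simp [Complex.mul_re, Complex.I_re, Complex.I_im]
    rw [h1, mul_comm M]
    exact mul_le_mul_of_nonneg_left (hfb y (le_of_lt hy)) (Real.exp_pos _).le
  have key := integral_posConvolution (μ := volume) (ν := volume) hhint hgint
    (ContinuousLinearMap.mul ℝ ℂ)
  simp only [ContinuousLinearMap.mul_apply'] at key
  have hgval : ∫ t in Set.Ioi (0:ℝ), g t = Complex.Gamma (-ν) * (-Complex.I * l) ^ ν := by
    rw [show g = fun t : ℝ => (t:ℂ) ^ (-ν - 1) * Complex.exp (-((-Complex.I * l) * t))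
      from funext hgeq]
    have h2 := gamma_cpow (s := -ν) (b := -Complex.I * l) hsre hbre
    rw [neg_neg] at h2
    exact h2
  have hGne : Complex.Gamma (-ν) ≠ 0 := Complex.Gamma_ne_zero_of_re_pos hsre
  have hLHS : ∀ x : ℝ, Complex.exp (Complex.I * l * x) * ((1 / Complex.Gamma (-ν)) *
        ∫ y in (0:ℝ)..x, ((x - y : ℝ) : ℂ) ^ (-ν - 1) * f y)
      = (1 / Complex.Gamma (-ν)) * ∫ t in (0:ℝ)..x, h t * g (x - t) := by
    intro x
    rw [mul_left_comm]
    congr 1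
    rw [← intervalIntegral.integral_const_mul]
    apply intervalIntegral.integral_congr
    intro y _
    simp only [hgdef, hhdef]
    rw [show Complex.I * l * x = Complex.I * l * y + Complex.I * l * ((x - y : ℝ) : ℂ) by
      push_cast; ring, Complex.exp_add]
    ring
  calc ∫ x in Set.Ioi (0 : ℝ), Complex.exp (Complex.I * l * x) *
        ((1 / Complex.Gamma (-ν)) * ∫ y in (0 : ℝ)..x, ((x - y : ℝ) : ℂ) ^ (-ν - 1) * f y)
      = ∫ x in Set.Ioi (0 : ℝ), (1 / Complex.Gamma (-ν)) * ∫ t in (0:ℝ)..x, h t * g (x - t) := by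
        exact setIntegral_congr_fun measurableSet_Ioi fun x _ => hLHS x
    _ = (1 / Complex.Gamma (-ν)) * ∫ x in Set.Ioi (0 : ℝ), ∫ t in (0:ℝ)..x, h t * g (x - t) := by
        rw [MeasureTheory.integral_const_mul]
    _ = (1 / Complex.Gamma (-ν)) * ((∫ x in Set.Ioi (0:ℝ), h x) * ∫ x in Set.Ioi (0:ℝ), g x) := by
        rw [key]
    _ = (-Complex.I * l) ^ ν * ∫ x in Set.Ioi (0 : ℝ), h x := by
        rw [hgval]
        field_simp
end

section
/- Let n ∈ ℕ with n ≥ 1, let ν ∈ ℂ with n − 1 < Re ν < n, and let f : ℝ → ℂ be a Schwartz function. Then for every x ∈ ℝ, the n-th iterated derivative at x of the function t ↦ (1/Γ(n−ν)) ∫_{−∞}^t (t−y)^{n−ν−1} f(y) dy equals (1/Γ(n−ν)) ∫_{−∞}^x (x−y)^{n−ν−1} f^{(n)}(y) dy. (That is, the Riemann–Liouville and Caputo fractional derivatives of order ν with basepoint −∞ coincide on Schwartz functions.) -/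
open MeasureTheory Complex SchwartzMap

namespace RLCaputoAux

/-- Master bound for the integrand, uniform over a unit ball of `t`. -/
lemma bound_master {w : ℂ} (hw1 : -1 < w.re) (hw2 : w.re < 0) (g : SchwartzMap ℝ ℂ) (t0 : ℝ) :
    ∃ B : ℝ → ℝ, IntegrableOn B (Set.Ioi 0) ∧
      ∀ s ∈ Set.Ioi (0:ℝ), ∀ t ∈ Metric.ball t0 1, ‖(s:ℂ) ^ w * g (t - s)‖ ≤ B s := by
  obtain ⟨C₀, hC₀pos, h₀⟩ := g.decay 0 0
  obtain ⟨C₂, hC₂pos, h₂⟩ := g.decay 2 0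
  simp only [pow_zero, one_mul, norm_iteratedFDeriv_zero] at h₀ h₂
  set c : ℝ := t0 + 1 with hc
  set R : ℝ := max 1 (t0 + 2) with hR
  have hR1 : (1:ℝ) ≤ R := le_max_left _ _
  have hRc : c + 1 ≤ R := by
    have := le_max_right 1 (t0 + 2); simp only [hc]; linarith
  refine ⟨fun s => if s ≤ R then C₀ * s ^ w.re else C₂ * ((s - c) ^ 2)⁻¹, ?_, ?_⟩
  · have head : IntegrableOn (fun s : ℝ => C₀ * s ^ w.re) (Set.Ioc 0 R) := by
      have h := intervalIntegral.intervalIntegrable_rpow' (a := 0) (b := R) hw1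
      rw [intervalIntegrable_iff_integrableOn_Ioc_of_le (by linarith)] at h
      exact h.const_mul _
    have tail : IntegrableOn (fun s : ℝ => C₂ * ((s - c) ^ 2)⁻¹) (Set.Ioi R) := by
      have h1 : IntegrableOn (fun u : ℝ => u ^ (-2:ℝ)) (Set.Ioi (R - c)) :=
        integrableOn_Ioi_rpow_of_lt (by norm_num) (by linarith)
      have h2 : Integrable ((Set.Ioi (R - c)).indicator fun u : ℝ => u ^ (-2:ℝ)) :=
        (integrable_indicator_iff measurableSet_Ioi).2 h1
      have h3 := h2.comp_sub_right c
      have h4 : ((Set.Ioi R).indicator fun s : ℝ => (s - c) ^ (-2:ℝ)) =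
          fun s => (Set.Ioi (R - c)).indicator (fun u : ℝ => u ^ (-2:ℝ)) (s - c) := by
        funext s
        by_cases hs : s ∈ Set.Ioi R
        · rw [Set.indicator_of_mem hs,
            Set.indicator_of_mem (by simp only [Set.mem_Ioi] at hs ⊢; linarith)]
        · rw [Set.indicator_of_notMem hs,
            Set.indicator_of_notMem (by simp only [Set.mem_Ioi] at hs ⊢; linarith)]
      have h5 : IntegrableOn (fun s : ℝ => (s - c) ^ (-2:ℝ)) (Set.Ioi R) :=
        (integrable_indicator_iff measurableSet_Ioi).1 (by rw [h4]; exact h3)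
      have h6 : IntegrableOn (fun s : ℝ => ((s - c) ^ 2)⁻¹) (Set.Ioi R) := by
        refine h5.congr_fun (fun s hs => ?_) measurableSet_Ioi
        have hsc : (0:ℝ) ≤ s - c := by
          simp only [Set.mem_Ioi] at hs; linarith
        beta_reduce; rw [Real.rpow_neg hsc, show (2:ℝ) = ((2:ℕ):ℝ) by norm_num, Real.rpow_natCast]
      exact h6.const_mul _
    have hunion : IntegrableOn
        (fun s => if s ≤ R then C₀ * s ^ w.re else C₂ * ((s - c) ^ 2)⁻¹)
        (Set.Ioc 0 R ∪ Set.Ioi R) := by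
      refine IntegrableOn.union ?_ ?_
      · exact head.congr_fun (fun s hs => by rw [if_pos hs.2]) measurableSet_Ioc
      · exact tail.congr_fun (fun s hs => by
          rw [if_neg (by simp only [Set.mem_Ioi] at hs; linarith)]) measurableSet_Ioi
    refine hunion.mono_set fun s hs => ?_
    rcases le_or_gt s R with h | h
    · exact Or.inl ⟨hs, h⟩
    · exact Or.inr h
  · intro s hs t ht
    dsimp only
    have hs0 : (0:ℝ) < s := hs
    rw [norm_mul, Complex.norm_cpow_eq_rpow_re_of_pos hs0]
    rw [Metric.mem_ball, Real.dist_eq] at ht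
    by_cases hsR : s ≤ R
    · rw [if_pos hsR]
      calc s ^ w.re * ‖g (t - s)‖ ≤ s ^ w.re * C₀ :=
            mul_le_mul_of_nonneg_left (h₀ _) (Real.rpow_nonneg hs0.le _)
        _ = C₀ * s ^ w.re := mul_comm _ _
    · rw [if_neg hsR]
      push_neg at hsR
      have hts : t < c := by
        have := abs_lt.1 ht; simp only [hc]; linarith
      have hcs : c + 1 < s := lt_of_le_of_lt hRc hsR
      have hsc0 : (0:ℝ) < s - c := by linarith
      have key : (s - c) ^ 2 * ‖g (t - s)‖ ≤ C₂ := by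
        refine le_trans ?_ (h₂ (t - s))
        have h1 : s - c ≤ ‖t - s‖ := by
          rw [Real.norm_eq_abs, abs_of_nonpos (by linarith), neg_sub]
          linarith
        have h2' : (s - c) ^ 2 ≤ ‖t - s‖ ^ 2 := by
          apply pow_le_pow_left₀ hsc0.le h1
        exact mul_le_mul_of_nonneg_right h2' (norm_nonneg _)
      have hg : ‖g (t - s)‖ ≤ C₂ * ((s - c) ^ 2)⁻¹ := by
        rw [mul_comm, ← div_eq_inv_mul, le_div_iff₀ (by positivity)]
        calc ‖g (t - s)‖ * (s - c) ^ 2 = (s - c) ^ 2 * ‖g (t - s)‖ := mul_comm _ _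
          _ ≤ C₂ := key
      have hrw : s ^ w.re ≤ 1 :=
        Real.rpow_le_one_of_one_le_of_nonpos (by linarith) hw2.le
      calc s ^ w.re * ‖g (t - s)‖ ≤ 1 * (C₂ * ((s - c) ^ 2)⁻¹) := by
            apply mul_le_mul hrw hg (norm_nonneg _) zero_le_one
        _ = C₂ * ((s - c) ^ 2)⁻¹ := one_mul _

lemma meas_aux (w : ℂ) (g : SchwartzMap ℝ ℂ) (t : ℝ) :
    AEStronglyMeasurable (fun s : ℝ => (s:ℂ) ^ w * g (t - s))
      (volume.restrict (Set.Ioi 0)) := by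
  apply ContinuousOn.aestronglyMeasurable _ measurableSet_Ioi
  apply ContinuousOn.mul
  · intro s hs
    exact (continuousAt_ofReal_cpow_const s w (Or.inr (ne_of_gt hs))).continuousWithinAt
  · exact (g.continuous.comp (continuous_const.sub continuous_id)).continuousOn

lemma integrableOn_aux {w : ℂ} (hw1 : -1 < w.re) (hw2 : w.re < 0) (g : SchwartzMap ℝ ℂ)
    (t : ℝ) : IntegrableOn (fun s : ℝ => (s:ℂ) ^ w * g (t - s)) (Set.Ioi 0) := by
  obtain ⟨B, hBint, hB⟩ := bound_master hw1 hw2 g t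
  refine Integrable.mono' hBint (meas_aux w g t) ?_
  refine (ae_restrict_iff' measurableSet_Ioi).2 (.of_forall fun s hs => ?_)
  exact hB s hs t (Metric.mem_ball_self one_pos)

lemma hasDerivAt_aux {w : ℂ} (hw1 : -1 < w.re) (hw2 : w.re < 0) (g : SchwartzMap ℝ ℂ)
    (t0 : ℝ) :
    HasDerivAt (fun t : ℝ => ∫ s in Set.Ioi (0:ℝ), (s:ℂ) ^ w * g (t - s))
      (∫ s in Set.Ioi (0:ℝ), (s:ℂ) ^ w * derivCLM ℝ ℂ g (t0 - s)) t0 := by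
  have key := hasDerivAt_integral_of_dominated_loc_of_deriv_le
    (μ := volume.restrict (Set.Ioi (0:ℝ)))
    (F := fun (t : ℝ) (s : ℝ) => (s:ℂ) ^ w * g (t - s))
    (F' := fun (t : ℝ) (s : ℝ) => (s:ℂ) ^ w * derivCLM ℝ ℂ g (t - s))
    (x₀ := t0) (s := Metric.ball t0 1) (Metric.ball_mem_nhds t0 one_pos)
    (Filter.Eventually.of_forall fun t => meas_aux w g t)
    (integrableOn_aux hw1 hw2 g t0)
    (meas_aux w (derivCLM ℝ ℂ g) t0)
    ?_ (bound_master hw1 hw2 (derivCLM ℝ ℂ g) t0).choose_spec.1 ?_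
  · exact key.2
  · refine (ae_restrict_iff' measurableSet_Ioi).2 (.of_forall fun s hs t ht => ?_)
    exact (bound_master hw1 hw2 (derivCLM ℝ ℂ g) t0).choose_spec.2 s hs t ht
  · refine (ae_restrict_iff' measurableSet_Ioi).2 (.of_forall fun s hs t ht => ?_)
    have h1 : HasDerivAt (fun t : ℝ => g (t - s)) (deriv (⇑g) (t - s)) t := by
      have hsub : HasDerivAt (fun x : ℝ => x - s) 1 t := by
        simpa using (hasDerivAt_id t).sub_const s
      have h3 := HasDerivAt.scomp t ((g.differentiableAt (x := t - s)).hasDerivAt) hsub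
      simpa [Function.comp_def] using h3
    simpa [SchwartzMap.derivCLM_apply] using h1.const_mul ((s:ℂ) ^ w)

/-- Change of variables `y = t - s`. -/
lemma change (w : ℂ) (h : ℝ → ℂ) (t : ℝ) :
    ∫ y in Set.Iic t, ((t - y : ℝ) : ℂ) ^ w * h y =
      ∫ s in Set.Ioi (0:ℝ), (s:ℂ) ^ w * h (t - s) := by
  set Φ : ℝ → ℂ := (Set.Ici (0:ℝ)).indicator (fun s => (s:ℂ) ^ w * h (t - s)) with hΦ
  have h1 : ∀ y : ℝ, (Set.Iic t).indicator (fun y => ((t - y : ℝ) : ℂ) ^ w * h y) y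
      = Φ (t - y) := by
    intro y
    by_cases hy : y ∈ Set.Iic t
    · rw [Set.indicator_of_mem hy, hΦ,
        Set.indicator_of_mem (by simp only [Set.mem_Ici]; simp only [Set.mem_Iic] at hy; linarith)]
      simp
    · rw [Set.indicator_of_notMem hy, hΦ,
        Set.indicator_of_notMem (by
          simp only [Set.mem_Ici]; simp only [Set.mem_Iic] at hy; push_neg; linarith)]
  calc ∫ y in Set.Iic t, ((t - y : ℝ) : ℂ) ^ w * h y
      = ∫ y, (Set.Iic t).indicator (fun y => ((t - y : ℝ) : ℂ) ^ w * h y) y := by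
        rw [integral_indicator measurableSet_Iic]
    _ = ∫ y, Φ (t - y) := by simp_rw [h1]
    _ = ∫ s, Φ s := integral_sub_left_eq_self Φ volume t
    _ = ∫ s in Set.Ici (0:ℝ), (s:ℂ) ^ w * h (t - s) := by
        rw [hΦ, integral_indicator measurableSet_Ici]
    _ = ∫ s in Set.Ioi (0:ℝ), (s:ℂ) ^ w * h (t - s) := integral_Ici_eq_integral_Ioi

lemma coe_iterate (g : SchwartzMap ℝ ℂ) :
    ∀ m : ℕ, ⇑((fun h : SchwartzMap ℝ ℂ => derivCLM ℝ ℂ h)^[m] g) = iteratedDeriv m ⇑g := by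
  intro m
  induction m generalizing g with
  | zero => simp
  | succ m ih =>
    have hd : ⇑(derivCLM ℝ ℂ g) = deriv ⇑g := funext fun y => SchwartzMap.derivCLM_apply (𝕜 := ℝ) (f := g) (x := y)
    rw [Function.iterate_succ_apply, ih (derivCLM ℝ ℂ g), iteratedDeriv_succ', hd]

lemma iterated {w : ℂ} (hw1 : -1 < w.re) (hw2 : w.re < 0) (c : ℂ) (g : SchwartzMap ℝ ℂ) :
    ∀ m : ℕ, iteratedDeriv m
        (fun t : ℝ => c * ∫ s in Set.Ioi (0:ℝ), (s:ℂ) ^ w * g (t - s))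
      = fun t => c * ∫ s in Set.Ioi (0:ℝ),
          (s:ℂ) ^ w * ((fun h : SchwartzMap ℝ ℂ => derivCLM ℝ ℂ h)^[m] g) (t - s) := by
  intro m
  induction m generalizing g with
  | zero => simp
  | succ m ih =>
    rw [iteratedDeriv_succ']
    have hderiv : deriv (fun t : ℝ => c * ∫ s in Set.Ioi (0:ℝ), (s:ℂ) ^ w * g (t - s))
        = fun t => c * ∫ s in Set.Ioi (0:ℝ), (s:ℂ) ^ w * derivCLM ℝ ℂ g (t - s) := by
      funext t
      exact ((hasDerivAt_aux hw1 hw2 g t).const_mul c).deriv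
    rw [hderiv, ih (derivCLM ℝ ℂ g), Function.iterate_succ_apply]

end RLCaputoAux

open RLCaputoAux in
/-- The Riemann–Liouville and Caputo fractional derivatives of order `ν`
(with `n - 1 < Re ν < n`) with basepoint `-∞` coincide on Schwartz functions. -/
theorem rl_eq_caputo_schwartz (n : ℕ) (hn : 1 ≤ n) (ν : ℂ)
    (hν₁ : (n : ℝ) - 1 < ν.re) (hν₂ : ν.re < n) (f : SchwartzMap ℝ ℂ) (x : ℝ) :
    iteratedDeriv n
        (fun t : ℝ => (1 / Complex.Gamma ((n : ℂ) - ν)) *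
          ∫ y in Set.Iic t, ((t - y : ℝ) : ℂ) ^ ((n : ℂ) - ν - 1) * f y) x =
      (1 / Complex.Gamma ((n : ℂ) - ν)) *
        ∫ y in Set.Iic x, ((x - y : ℝ) : ℂ) ^ ((n : ℂ) - ν - 1) *
          iteratedDeriv n (⇑f) y := by
  set w : ℂ := (n : ℂ) - ν - 1 with hw
  have hwre : w.re = (n : ℝ) - ν.re - 1 := by
    simp [hw, Complex.sub_re, Complex.natCast_re, Complex.one_re]
  have hw1 : -1 < w.re := by rw [hwre]; linarith
  have hw2 : w.re < 0 := by rw [hwre]; linarith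
  set c : ℂ := 1 / Complex.Gamma ((n : ℂ) - ν) with hcdef
  have hfun : (fun t : ℝ => c * ∫ y in Set.Iic t, ((t - y : ℝ) : ℂ) ^ w * f y)
      = fun t : ℝ => c * ∫ s in Set.Ioi (0:ℝ), (s:ℂ) ^ w * f (t - s) := by
    funext t
    rw [change w (⇑f) t]
  rw [hfun, iterated hw1 hw2 c f n]
  simp only [coe_iterate f n]
  rw [← change w (iteratedDeriv n (⇑f)) x]
end

section
/- Let ν ∈ ℂ with Re ν < 0 and let f, g : ℝ → ℂ be Schwartz functions. Then for every x ∈ ℝ, ∫_ℝ (D_+^ν f)(x − t) · g(t) dt = ∫_ℝ f(x − t) · (D_+^ν g)(t) dt; that is, (D_+^ν f) ∗ g = f ∗ (D_+^ν g). -/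
open MeasureTheory Complex SchwartzMap

private lemma rl_measurable_cpow (c : ℂ) : Measurable fun s : ℝ => ((s : ℝ) : ℂ) ^ c := by
  have h : (fun s : ℝ => ((s : ℝ) : ℂ) ^ c)
      = fun s : ℝ => if ((s : ℝ) : ℂ) = 0 then (if c = 0 then 1 else 0)
        else Complex.exp (Complex.log ((s : ℝ) : ℂ) * c) := by
    funext s; rw [Complex.cpow_def]
  rw [h]
  refine Measurable.ite ?_ measurable_const ?_
  · exact Complex.measurable_ofReal (measurableSet_singleton 0)
  · exact ((Complex.measurable_log.comp Complex.measurable_ofReal).mul_const c).cexp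

private lemma rl_subst (w : ℂ) (h : ℝ → ℂ) (u : ℝ) :
    ∫ y in Set.Iic u, ((u - y : ℝ) : ℂ) ^ w * h y
      = ∫ s in Set.Ioi (0 : ℝ), ((s : ℝ) : ℂ) ^ w * h (u - s) := by
  have hemb : MeasurableEmbedding (fun s : ℝ => u - s) :=
    (MeasurableEquiv.subLeft u).measurableEmbedding
  have hmap : Measure.map (fun s : ℝ => u - s) (volume : Measure ℝ) = volume :=
    Measure.map_sub_left_eq_self volume u
  have hset : (fun s : ℝ => u - s) ⁻¹' Set.Iic u = Set.Ici 0 := by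
    ext s; simp [sub_le_self_iff]
  have key := hemb.setIntegral_map (μ := volume)
    (fun y : ℝ => ((u - y : ℝ) : ℂ) ^ w * h y) (Set.Iic u)
  rw [hmap, hset] at key
  rw [key, MeasureTheory.integral_Ici_eq_integral_Ioi]
  refine setIntegral_congr_fun measurableSet_Ioi fun s _ => ?_
  simp [sub_sub_cancel]

/-- The Riemann–Liouville fractional integral with basepoint `-∞` of order `ν`
(`Re ν < 0`) commutes with convolution of Schwartz functions:
`(D_+^ν f) ∗ g = f ∗ (D_+^ν g)`. -/
theorem rl_integral_convolution (ν : ℂ) (hν : ν.re < 0)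
    (f g : SchwartzMap ℝ ℂ)
    (D : (ℝ → ℂ) → (ℝ → ℂ))
    (hD : D = fun h : ℝ → ℂ => fun u : ℝ =>
      (1 / Complex.Gamma (-ν)) *
        ∫ y in Set.Iic u, ((u - y : ℝ) : ℂ) ^ (-ν - 1) * h y) :
    ∀ x : ℝ, ∫ t : ℝ, D (⇑f) (x - t) * g t = ∫ t : ℝ, f (x - t) * D (⇑g) t := by
  intro x
  set w : ℂ := -ν - 1 with hw
  set c : ℂ := 1 / Complex.Gamma (-ν) with hc
  set ρ : ℝ → ℂ := fun s => ((s : ℝ) : ℂ) ^ w with hρ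
  have ha : (-1 : ℝ) < w.re := by
    simp only [hw, Complex.sub_re, Complex.neg_re, Complex.one_re]
    linarith
  obtain ⟨n, hn⟩ := exists_nat_ge w.re
  set k : ℕ := n + 2 with hk
  -- rewrite D via the substitution lemma
  have hDf : ∀ (h : SchwartzMap ℝ ℂ) (u : ℝ),
      D (⇑h) u = c * ∫ s in Set.Ioi (0 : ℝ), ρ s * h (u - s) := by
    intro h u
    rw [hD]
    simp only [← hw, ← hc]
    rw [rl_subst w (⇑h) u]
  -- decay bound for f
  obtain ⟨Cf, hCf0, hCf⟩ : ∃ C : ℝ, 0 ≤ C ∧ ∀ u : ℝ, ‖f u‖ ≤ C * ((1 + |u|) ^ k)⁻¹ := by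
    refine ⟨2 ^ k * ((Finset.Iic (k, 0)).sup fun m => SchwartzMap.seminorm ℝ m.1 m.2) f,
      by positivity, fun u => ?_⟩
    have h1 := SchwartzMap.one_add_le_sup_seminorm_apply (𝕜 := ℝ) (m := (k, 0))
      le_rfl le_rfl f u
    rw [norm_iteratedFDeriv_zero] at h1
    have hpos : (0 : ℝ) < (1 + |u|) ^ k := by positivity
    rw [Real.norm_eq_abs] at h1
    calc ‖f u‖ = (1 + |u|) ^ k * ‖f u‖ * ((1 + |u|) ^ k)⁻¹ := by field_simp
      _ ≤ _ := by gcongr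
  -- moment integrability for g
  have hg_mom : Integrable (fun t : ℝ => (1 + |t|) ^ k * ‖g t‖) := by
    have key : (fun t : ℝ => (1 + |t|) ^ k * ‖g t‖)
        = fun t : ℝ => ∑ i ∈ Finset.range (k + 1),
            (|t| ^ i * ‖g t‖) * ((k.choose i : ℝ)) := by
      funext t
      rw [add_comm (1 : ℝ) |t|, add_pow, Finset.sum_mul]
      exact Finset.sum_congr rfl fun i _ => by ring
    rw [key]
    refine integrable_finset_sum _ fun i _ => Integrable.mul_const ?_ _
    simpa [Real.norm_eq_abs] using g.integrable_pow_mul (volume : Measure ℝ) i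
  set G : ℝ := ∫ t : ℝ, (1 + |t|) ^ k * ‖g t‖ with hG
  have hG0 : 0 ≤ G := integral_nonneg fun t => by positivity
  -- key pointwise inequality
  have hkey : ∀ s t : ℝ, ‖f (x - t - s)‖ ≤ Cf * ((1 + |x - s|) ^ k)⁻¹ * (1 + |t|) ^ k := by
    intro s t
    have hp1 : (0 : ℝ) < (1 + |x - t - s|) ^ k := by positivity
    have hp2 : (0 : ℝ) < (1 + |x - s|) ^ k := by positivity
    have h1 : (1 + |x - s|) ≤ (1 + |x - t - s|) * (1 + |t|) := by
      have h0 : |x - s| ≤ |x - t - s| + |t| := by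
        calc |x - s| = |(x - t - s) + t| := by ring_nf
          _ ≤ |x - t - s| + |t| := abs_add_le _ _
      nlinarith [abs_nonneg (x - t - s), abs_nonneg t]
    have h2 : (1 + |x - s|) ^ k ≤ (1 + |x - t - s|) ^ k * (1 + |t|) ^ k := by
      rw [← mul_pow]
      exact pow_le_pow_left₀ (by positivity) h1 k
    have h3 : ((1 + |x - t - s|) ^ k)⁻¹ ≤ (1 + |t|) ^ k * ((1 + |x - s|) ^ k)⁻¹ := by
      rw [inv_le_iff_one_le_mul₀ hp1]
      calc (1 : ℝ) = ((1 + |x - s|) ^ k) * ((1 + |x - s|) ^ k)⁻¹ := by field_simp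
        _ ≤ ((1 + |x - t - s|) ^ k * (1 + |t|) ^ k) * ((1 + |x - s|) ^ k)⁻¹ := by gcongr
        _ = (1 + |t|) ^ k * ((1 + |x - s|) ^ k)⁻¹ * (1 + |x - t - s|) ^ k := by ring
    calc ‖f (x - t - s)‖ ≤ Cf * ((1 + |x - t - s|) ^ k)⁻¹ := hCf _
      _ ≤ Cf * ((1 + |t|) ^ k * ((1 + |x - s|) ^ k)⁻¹) := by gcongr
      _ = Cf * ((1 + |x - s|) ^ k)⁻¹ * (1 + |t|) ^ k := by ring
  -- norm of the kernel
  have hρ_norm : ∀ s : ℝ, 0 < s → ‖ρ s‖ = s ^ w.re := fun s hs => by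
    rw [hρ]; exact Complex.norm_cpow_eq_rpow_re_of_pos hs w
  have hρ_meas : Measurable ρ := rl_measurable_cpow w
  set μ0 : Measure ℝ := volume.restrict (Set.Ioi (0 : ℝ)) with hμ0
  set F₁ : ℝ × ℝ → ℂ := fun p => ρ p.1 * (f (x - p.2 - p.1) * g p.2) with hF₁
  set F₂ : ℝ × ℝ → ℂ := fun p => ρ p.1 * (f (x - p.2) * g (p.2 - p.1)) with hF₂
  have hmeas1 : AEStronglyMeasurable F₁ (μ0.prod volume) := by
    refine Measurable.aestronglyMeasurable ?_
    exact (hρ_meas.comp measurable_fst).mul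
      (((f.continuous.measurable).comp
        ((measurable_const.sub measurable_snd).sub measurable_fst)).mul
        ((g.continuous.measurable).comp measurable_snd))
  have hmeas2 : AEStronglyMeasurable F₂ (μ0.prod volume) := by
    refine Measurable.aestronglyMeasurable ?_
    exact (hρ_meas.comp measurable_fst).mul
      (((f.continuous.measurable).comp (measurable_const.sub measurable_snd)).mul
        ((g.continuous.measurable).comp (measurable_snd.sub measurable_fst)))
  -- the majorant
  set ψ : ℝ → ℝ := fun s => (Cf * G) * (‖ρ s‖ * ((1 + |x - s|) ^ k)⁻¹) with hψ
  have hψ_int : Integrable ψ μ0 := by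
    refine Integrable.const_mul ?_ _
    have hmeasψ : Measurable fun s : ℝ => ‖ρ s‖ * ((1 + |x - s|) ^ k)⁻¹ := by
      refine hρ_meas.norm.mul ?_
      exact (((measurable_const.sub measurable_id').abs.const_add 1).pow_const k).inv
    rw [hμ0, ← Set.Ioc_union_Ioi_eq_Ioi (zero_le_one : (0:ℝ) ≤ 1)]
    have hIoc : IntegrableOn (fun s : ℝ => ‖ρ s‖ * ((1 + |x - s|) ^ k)⁻¹) (Set.Ioc 0 1) := by
      have hbase : IntegrableOn (fun s : ℝ => s ^ w.re) (Set.Ioc 0 1) := by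
        refine ((intervalIntegral.integrableOn_Ioo_rpow_iff (by norm_num : (0:ℝ) < 2)).mpr
          ha).mono_set ?_
        exact fun s hs => ⟨hs.1, lt_of_le_of_lt hs.2 one_lt_two⟩
      refine hbase.mono' hmeasψ.aestronglyMeasurable ?_
      filter_upwards [ae_restrict_mem measurableSet_Ioc] with s hs
      have hs0 : 0 < s := hs.1
      have h1 : ((1 + |x - s|) ^ k)⁻¹ ≤ 1 := by
        rw [inv_le_one_iff₀]; right; exact one_le_pow₀ (le_add_of_nonneg_right (abs_nonneg _))
      rw [Real.norm_eq_abs, _root_.abs_of_nonneg (mul_nonneg (norm_nonneg _) (by positivity)), hρ_norm s hs0]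
      calc s ^ w.re * ((1 + |x - s|) ^ k)⁻¹ ≤ s ^ w.re * 1 := by
            gcongr
        _ = s ^ w.re := mul_one _
    have hIoi : IntegrableOn (fun s : ℝ => ‖ρ s‖ * ((1 + |x - s|) ^ k)⁻¹) (Set.Ioi 1) := by
      have hbase : Integrable (fun s : ℝ => (1 + |x|) ^ n * (1 + (x - s) ^ 2)⁻¹) := by
        exact (integrable_inv_one_add_sq.comp_sub_left x).const_mul _
      refine (hbase.integrableOn).mono' hmeasψ.aestronglyMeasurable ?_
      filter_upwards [ae_restrict_mem measurableSet_Ioi] with s hs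
      have hs1 : (1 : ℝ) < s := hs
      have hs0 : (0 : ℝ) < s := by linarith
      rw [Real.norm_eq_abs, _root_.abs_of_nonneg (mul_nonneg (norm_nonneg _) (by positivity)), hρ_norm s hs0]
      have e1 : s ^ w.re ≤ s ^ (n : ℕ) := by
        rw [← Real.rpow_natCast s n]
        exact Real.rpow_le_rpow_of_exponent_le hs1.le hn
      have e2 : s ^ (n : ℕ) ≤ (1 + |x|) ^ n * (1 + |x - s|) ^ n := by
        rw [← mul_pow]
        refine pow_le_pow_left₀ hs0.le ?_ n
        have h0 : s = |s| := (abs_of_pos hs0).symm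
        have h1 : |s| ≤ |x| + |x - s| := by
          calc |s| = |x - (x - s)| := by ring_nf
            _ ≤ |x| + |x - s| := _root_.abs_sub _ _
        nlinarith [abs_nonneg x, abs_nonneg (x - s)]
      have e3 : ((1 + |x - s|) ^ k)⁻¹ * (1 + |x - s|) ^ n ≤ (1 + (x - s) ^ 2)⁻¹ := by
        have hkk : (1 + |x - s|) ^ k = (1 + |x - s|) ^ n * (1 + |x - s|) ^ 2 := by
          rw [hk, pow_add]
        have hq : (1 + (x - s) ^ 2) ≤ (1 + |x - s|) ^ 2 := by
          nlinarith [abs_nonneg (x - s), _root_.sq_abs (x - s)]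
        have hp : (0 : ℝ) < (1 + |x - s|) ^ n := by positivity
        have hq0 : (0 : ℝ) < 1 + (x - s) ^ 2 := by positivity
        rw [hkk, mul_inv, mul_comm, ← mul_assoc, mul_inv_cancel₀ hp.ne', one_mul]
        exact inv_anti₀ hq0 hq
      calc s ^ w.re * ((1 + |x - s|) ^ k)⁻¹
          ≤ ((1 + |x|) ^ n * (1 + |x - s|) ^ n) * ((1 + |x - s|) ^ k)⁻¹ := by
            refine mul_le_mul_of_nonneg_right (e1.trans e2) (by positivity)
        _ = (1 + |x|) ^ n * (((1 + |x - s|) ^ k)⁻¹ * (1 + |x - s|) ^ n) := by ring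
        _ ≤ (1 + |x|) ^ n * (1 + (x - s) ^ 2)⁻¹ := by
            refine mul_le_mul_of_nonneg_left e3 (by positivity)
    exact hIoc.union hIoi
  -- integrability of F₁
  have hslice1 : ∀ s : ℝ, Integrable (fun t => F₁ (s, t)) := by
    intro s
    have hb : Integrable fun t : ℝ => f (x - t - s) * g t := by
      refine (g.integrable (μ := volume)).bdd_mul (c := (SchwartzMap.seminorm ℝ 0 0) f) ?_ ?_
      · exact ((f.continuous.comp ((continuous_const.sub continuous_id).sub continuous_const)).aestronglyMeasurable)
      · exact Filter.Eventually.of_forall fun t => f.norm_le_seminorm ℝ _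
    simpa [hF₁, mul_assoc] using hb.const_mul (ρ s)
  have hint1 : Integrable F₁ (μ0.prod volume) := by
    refine (integrable_prod_iff hmeas1).mpr ⟨Filter.Eventually.of_forall hslice1, ?_⟩
    refine Integrable.mono' hψ_int (hmeas1.norm.integral_prod_right') ?_
    filter_upwards [ae_restrict_mem measurableSet_Ioi] with s hs
    have hs0 : (0 : ℝ) < s := hs
    have hbound : ∀ t : ℝ, ‖F₁ (s, t)‖
        ≤ (‖ρ s‖ * (Cf * ((1 + |x - s|) ^ k)⁻¹)) * ((1 + |t|) ^ k * ‖g t‖) := by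
      intro t
      have : ‖F₁ (s, t)‖ = ‖ρ s‖ * (‖f (x - t - s)‖ * ‖g t‖) := by
        simp [hF₁, norm_mul]
      rw [this]
      calc ‖ρ s‖ * (‖f (x - t - s)‖ * ‖g t‖)
          ≤ ‖ρ s‖ * ((Cf * ((1 + |x - s|) ^ k)⁻¹ * (1 + |t|) ^ k) * ‖g t‖) := by
            refine mul_le_mul_of_nonneg_left ?_ (norm_nonneg _)
            exact mul_le_mul_of_nonneg_right (hkey s t) (norm_nonneg _)
        _ = (‖ρ s‖ * (Cf * ((1 + |x - s|) ^ k)⁻¹)) * ((1 + |t|) ^ k * ‖g t‖) := by ring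
    have hInt : ∫ t : ℝ, ‖F₁ (s, t)‖
        ≤ ∫ t : ℝ, (‖ρ s‖ * (Cf * ((1 + |x - s|) ^ k)⁻¹)) * ((1 + |t|) ^ k * ‖g t‖) := by
      refine integral_mono_of_nonneg (Filter.Eventually.of_forall fun t => norm_nonneg _)
        (hg_mom.const_mul _) (Filter.Eventually.of_forall hbound)
    have hval : ∫ t : ℝ, (‖ρ s‖ * (Cf * ((1 + |x - s|) ^ k)⁻¹)) * ((1 + |t|) ^ k * ‖g t‖)
        = (‖ρ s‖ * (Cf * ((1 + |x - s|) ^ k)⁻¹)) * G := by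
      rw [hG, MeasureTheory.integral_const_mul]
    rw [Real.norm_of_nonneg (integral_nonneg fun t => norm_nonneg _)]
    calc ∫ t : ℝ, ‖F₁ (s, t)‖ ≤ (‖ρ s‖ * (Cf * ((1 + |x - s|) ^ k)⁻¹)) * G := by
          rw [← hval]; exact hInt
      _ = ψ s := by rw [hψ]; ring
  -- integrability of F₂
  have hint2 : Integrable F₂ (μ0.prod volume) := by
    refine (integrable_prod_iff hmeas2).mpr ⟨?_, ?_⟩
    · refine Filter.Eventually.of_forall fun s => ?_
      have hb : Integrable fun t : ℝ => f (x - t) * g (t - s) := by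
        refine ((g.integrable (μ := volume)).comp_sub_right s).bdd_mul (c := (SchwartzMap.seminorm ℝ 0 0) f) ?_ ?_
        · exact ((f.continuous.comp (continuous_const.sub continuous_id)).aestronglyMeasurable)
        · exact Filter.Eventually.of_forall fun t => f.norm_le_seminorm ℝ _
      simpa [hF₂, mul_assoc] using hb.const_mul (ρ s)
    · have heq : (fun s : ℝ => ∫ t : ℝ, ‖F₂ (s, t)‖)
          = fun s : ℝ => ∫ t : ℝ, ‖F₁ (s, t)‖ := by
        funext s
        have h1 : ∀ t : ℝ, F₂ (s, t) = F₁ (s, t - s) := by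
          intro t
          simp only [hF₁, hF₂]
          rw [show x - (t - s) - s = x - t by ring]
        calc ∫ t : ℝ, ‖F₂ (s, t)‖ = ∫ t : ℝ, ‖F₁ (s, t - s)‖ := by
              simp_rw [h1]
          _ = ∫ t : ℝ, ‖F₁ (s, t)‖ := integral_sub_right_eq_self (fun t => ‖F₁ (s, t)‖) s
      rw [heq]
      exact ((integrable_prod_iff hmeas1).mp hint1).2
  -- main computation
  have lhs_eq : ∫ t : ℝ, D (⇑f) (x - t) * g t
      = c * ∫ s in Set.Ioi (0 : ℝ), ρ s * ∫ t : ℝ, f (x - t - s) * g t := by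
    calc ∫ t : ℝ, D (⇑f) (x - t) * g t
        = ∫ t : ℝ, c * ∫ s in Set.Ioi (0 : ℝ), ρ s * (f (x - t - s) * g t) := by
          refine integral_congr_ae (Filter.Eventually.of_forall fun t => ?_)
          beta_reduce
          rw [hDf f (x - t), mul_assoc, ← MeasureTheory.integral_mul_const]
          congr 1
          refine integral_congr_ae (Filter.Eventually.of_forall fun s => ?_)
          beta_reduce
          rw [mul_assoc]
      _ = c * ∫ t : ℝ, ∫ s in Set.Ioi (0 : ℝ), ρ s * (f (x - t - s) * g t) :=
          MeasureTheory.integral_const_mul c _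
      _ = c * ∫ s in Set.Ioi (0 : ℝ), ∫ t : ℝ, ρ s * (f (x - t - s) * g t) := by
          congr 1
          refine MeasureTheory.integral_integral_swap ?_
          exact hint1.swap
      _ = c * ∫ s in Set.Ioi (0 : ℝ), ρ s * ∫ t : ℝ, f (x - t - s) * g t := by
          congr 1
          refine integral_congr_ae (Filter.Eventually.of_forall fun s => ?_)
          beta_reduce
          rw [MeasureTheory.integral_const_mul]
  have rhs_eq : ∫ t : ℝ, f (x - t) * D (⇑g) t
      = c * ∫ s in Set.Ioi (0 : ℝ), ρ s * ∫ t : ℝ, f (x - t) * g (t - s) := by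
    calc ∫ t : ℝ, f (x - t) * D (⇑g) t
        = ∫ t : ℝ, c * ∫ s in Set.Ioi (0 : ℝ), ρ s * (f (x - t) * g (t - s)) := by
          refine integral_congr_ae (Filter.Eventually.of_forall fun t => ?_)
          beta_reduce
          rw [hDf g t]
          rw [mul_comm (f (x - t)) _, mul_assoc, ← MeasureTheory.integral_mul_const]
          congr 1
          refine integral_congr_ae (Filter.Eventually.of_forall fun s => ?_)
          beta_reduce
          ring
      _ = c * ∫ t : ℝ, ∫ s in Set.Ioi (0 : ℝ), ρ s * (f (x - t) * g (t - s)) :=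
          MeasureTheory.integral_const_mul c _
      _ = c * ∫ s in Set.Ioi (0 : ℝ), ∫ t : ℝ, ρ s * (f (x - t) * g (t - s)) := by
          congr 1
          refine MeasureTheory.integral_integral_swap ?_
          exact hint2.swap
      _ = c * ∫ s in Set.Ioi (0 : ℝ), ρ s * ∫ t : ℝ, f (x - t) * g (t - s) := by
          congr 1
          refine integral_congr_ae (Filter.Eventually.of_forall fun s => ?_)
          beta_reduce
          rw [MeasureTheory.integral_const_mul]
  rw [lhs_eq, rhs_eq]
  congr 1
  refine integral_congr_ae (Filter.Eventually.of_forall fun s => ?_)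
  beta_reduce
  congr 1
  have := MeasureTheory.integral_add_right_eq_self (μ := (volume : Measure ℝ)) (fun t : ℝ => f (x - t) * g (t - s)) s
  calc ∫ t : ℝ, f (x - t - s) * g t
      = ∫ t : ℝ, f (x - (t + s)) * g ((t + s) - s) := by
        refine integral_congr_ae (Filter.Eventually.of_forall fun t => ?_)
        beta_reduce
        rw [show x - (t + s) = x - t - s by ring, add_sub_cancel_right]
    _ = ∫ t : ℝ, f (x - t) * g (t - s) := this
end

section
/- Let n ≥ 1, let A be a finite nonempty set of multi-indices α : Fin n → ℝ with all components α_i ≥ 0, let ν > 0 be such that Σ_i α_i = ν for every α ∈ A, and let c : A → ℂ. Define σ : (Fin n → ℝ) → ℂ by σ(λ) = Σ_{α ∈ A} c_α · ∏_i (λ_i)^{α_i}, where each power (λ_i)^{α_i} is the principal complex power Complex.cpow of the complex coercion of λ_i. If σ(λ) ≠ 0 for every λ ≠ 0, then there exists a constant C > 0 such that |σ(λ)| ≥ C · ‖λ‖^ν for all λ ∈ ℝ^n (Euclidean norm). -/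
open Finset

private lemma ofReal_mul_cpow (t : ℝ) (ht : 0 < t) (x : ℝ) (a : ℂ) :
    ((t * x : ℝ) : ℂ) ^ a = (t : ℂ) ^ a * (x : ℂ) ^ a := by
  rcases eq_or_ne x 0 with rfl | hx
  · rcases eq_or_ne a 0 with rfl | ha
    · simp
    · simp [Complex.zero_cpow ha]
  · have ht' : ((t : ℝ) : ℂ) ≠ 0 := by exact_mod_cast ht.ne'
    have hx' : ((x : ℝ) : ℂ) ≠ 0 := by exact_mod_cast hx
    rw [Complex.ofReal_mul, Complex.cpow_def_of_ne_zero (mul_ne_zero ht' hx'),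
      Complex.cpow_def_of_ne_zero ht', Complex.cpow_def_of_ne_zero hx',
      Complex.log_ofReal_mul ht hx', add_mul, Complex.exp_add,
      Complex.ofReal_log ht.le]

private lemma prod_cpow_eq {ι : Type*} (s : Finset ι) (t : ℂ) (ht : t ≠ 0) (f : ι → ℂ) :
    (∏ i ∈ s, t ^ (f i)) = t ^ (∑ i ∈ s, f i) := by
  classical
  induction s using Finset.induction_on with
  | empty => simp
  | insert _ _ h ih =>
    rw [Finset.prod_insert h, Finset.sum_insert h, Complex.cpow_add _ _ ht, ih]

private lemma cpow_real_continuous (a : ℝ) (ha : 0 ≤ a) :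
    Continuous (fun x : ℝ => (x : ℂ) ^ (a : ℂ)) := by
  rcases eq_or_lt_of_le ha with rfl | ha'
  · simpa using continuous_const (y := (1 : ℂ))
  · exact Complex.continuous_ofReal_cpow_const (by simpa using ha')

/-- A homogeneous elliptic fractional symbol of degree `ν > 0` is bounded below
by a positive constant multiple of `‖λ‖^ν`. -/
theorem elliptic_symbol_lower_bound (n : ℕ) (hn : 1 ≤ n)
    (A : Finset (Fin n → ℝ)) (hA : A.Nonempty)
    (hnonneg : ∀ α ∈ A, ∀ i, 0 ≤ α i)
    (ν : ℝ) (hνpos : 0 < ν) (hhom : ∀ α ∈ A, ∑ i, α i = ν)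
    (c : (Fin n → ℝ) → ℂ)
    (σ : EuclideanSpace ℝ (Fin n) → ℂ)
    (hσ : ∀ ξ : EuclideanSpace ℝ (Fin n),
      σ ξ = ∑ α ∈ A, c α * ∏ i, ((ξ i : ℂ)) ^ ((α i : ℂ)))
    (hell : ∀ ξ : EuclideanSpace ℝ (Fin n), ξ ≠ 0 → σ ξ ≠ 0) :
    ∃ C : ℝ, 0 < C ∧ ∀ ξ : EuclideanSpace ℝ (Fin n), C * ‖ξ‖ ^ ν ≤ ‖σ ξ‖ := by
  -- continuity of σ
  have hcont : Continuous σ := by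
    have : Continuous fun ξ : EuclideanSpace ℝ (Fin n) =>
        ∑ α ∈ A, c α * ∏ i, ((ξ i : ℂ)) ^ ((α i : ℂ)) := by
      refine continuous_finset_sum _ fun α hα => ?_
      refine continuous_const.mul (continuous_finset_prod _ fun i _ => ?_)
      exact (cpow_real_continuous (α i) (hnonneg α hα i)).comp
        ((continuous_apply i).comp (PiLp.continuous_ofLp 2 fun _ : Fin n => ℝ))
    exact this.congr fun ξ => (hσ ξ).symm
  -- homogeneity : σ (t • u) = t ^ ν * σ u for t > 0
  have hhomog : ∀ (t : ℝ), 0 < t → ∀ u : EuclideanSpace ℝ (Fin n),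
      σ (t • u) = (t : ℂ) ^ (ν : ℂ) * σ u := by
    intro t ht u
    rw [hσ, hσ, Finset.mul_sum]
    refine Finset.sum_congr rfl fun α hα => ?_
    have : ∀ i, (((t • u : EuclideanSpace ℝ (Fin n)) i : ℂ)) ^ ((α i : ℂ))
        = (t : ℂ) ^ ((α i : ℂ)) * ((u i : ℂ)) ^ ((α i : ℂ)) := by
      intro i
      have : (t • u : EuclideanSpace ℝ (Fin n)) i = t * u i := rfl
      rw [this, ofReal_mul_cpow t ht]
    simp_rw [this, Finset.prod_mul_distrib]
    rw [prod_cpow_eq Finset.univ (t : ℂ) (by exact_mod_cast ht.ne') fun i => (α i : ℂ)]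
    have : (∑ i, (α i : ℂ)) = (ν : ℂ) := by
      rw [← Complex.ofReal_sum]
      exact_mod_cast congrArg (Complex.ofReal) (hhom α hα)
    rw [this]; ring
  -- σ 0 = 0
  have hσ0 : σ 0 = 0 := by
    rw [hσ]
    refine Finset.sum_eq_zero fun α hα => ?_
    have : ∃ i, α i ≠ 0 := by
      by_contra h
      push_neg at h
      have := hhom α hα
      simp [h] at this
      exact hνpos.ne this
    obtain ⟨i, hi⟩ := this
    have : ((0 : EuclideanSpace ℝ (Fin n)) i : ℂ) ^ ((α i : ℂ)) = 0 := by
      have h0 : ((0 : EuclideanSpace ℝ (Fin n)) i : ℝ) = 0 := rfl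
      rw [h0]
      exact Complex.zero_cpow (by exact_mod_cast hi)
    rw [Finset.prod_eq_zero (Finset.mem_univ i) this, mul_zero]
  -- minimum on the sphere
  have hsphere : (Metric.sphere (0 : EuclideanSpace ℝ (Fin n)) 1).Nonempty := by
    haveI : Nonempty (Fin n) := ⟨⟨0, hn⟩⟩
    exact NormedSpace.sphere_nonempty.mpr zero_le_one
  obtain ⟨u₀, hu₀, hmin⟩ := (isCompact_sphere (0 : EuclideanSpace ℝ (Fin n)) 1).exists_isMinOn
    hsphere (hcont.norm.continuousOn)
  set C := ‖σ u₀‖ with hC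
  have hu₀norm : ‖u₀‖ = 1 := by simpa using hu₀
  have hu₀ne : u₀ ≠ 0 := fun h => by simp [h] at hu₀norm
  have hCpos : 0 < C := norm_pos_iff.mpr (hell u₀ hu₀ne)
  refine ⟨C, hCpos, fun ξ => ?_⟩
  rcases eq_or_ne ξ 0 with rfl | hξ
  · simp [hσ0, Real.zero_rpow hνpos.ne']
  · have hnorm : 0 < ‖ξ‖ := norm_pos_iff.mpr hξ
    set u : EuclideanSpace ℝ (Fin n) := ‖ξ‖⁻¹ • ξ with hu
    have hunorm : ‖u‖ = 1 := by
      rw [hu, norm_smul, norm_inv, norm_norm, inv_mul_cancel₀ hnorm.ne']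
    have hξu : ξ = ‖ξ‖ • u := by
      rw [hu, smul_smul, mul_inv_cancel₀ hnorm.ne', one_smul]
    have hval : σ ξ = (‖ξ‖ : ℂ) ^ ((ν : ℝ) : ℂ) * σ u := by
      conv_lhs => rw [hξu]
      exact hhomog ‖ξ‖ hnorm u
    have hns : ‖σ ξ‖ = ‖ξ‖ ^ ν * ‖σ u‖ := by
      rw [hval, norm_mul]
      congr 1
      rw [Complex.norm_cpow_eq_rpow_re_of_pos hnorm]
      simp
    have hmin' : C ≤ ‖σ u‖ := hmin (by simpa using hunorm)
    calc C * ‖ξ‖ ^ ν ≤ ‖σ u‖ * ‖ξ‖ ^ ν :=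
          mul_le_mul_of_nonneg_right hmin' (Real.rpow_nonneg hnorm.le ν)
      _ = ‖σ ξ‖ := by rw [hns, mul_comm]
end

section
/- Let n ≥ 1, let A be a finite nonempty set of multi-indices α : Fin n → ℝ with all components α_i ≥ 0, and let c : A → ℂ. Set |α| := Σ_i α_i, let ν := max_{α ∈ A} |α|, and define P, σ_P : (Fin n → ℝ) → ℂ by P(λ) = Σ_{α ∈ A} c_α · ∏_i (λ_i)^{α_i} and σ_P(λ) = Σ_{α ∈ A, |α| = ν} c_α · ∏_i (λ_i)^{α_i}, where the powers are principal complex powers of the complex coercions of λ_i. Suppose P(D) is elliptic, i.e. σ_P(λ) ≠ 0 for every λ ∈ ℝ^n with λ ≠ 0. Then there exist positive real constants C and R such that for every λ ∈ ℝ^n with ‖λ‖ > R (Euclidean norm), |P(λ)| ≥ C · (1 + ‖λ‖²)^{ν/2}. -/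
open Finset

lemma my_real_mul_cpow {r : ℝ} (hr : 0 < r) (z : ℂ) (a : ℂ) :
    ((r : ℂ) * z) ^ a = (r : ℂ) ^ a * z ^ a := by
  rcases eq_or_ne z 0 with rfl | hz
  · rcases eq_or_ne a 0 with rfl | ha
    · simp
    · simp [Complex.zero_cpow ha]
  · have hr' : (r : ℂ) ≠ 0 := by exact_mod_cast hr.ne'
    rw [Complex.cpow_def_of_ne_zero (mul_ne_zero hr' hz),
      Complex.cpow_def_of_ne_zero hr', Complex.cpow_def_of_ne_zero hz,
      Complex.log_ofReal_mul hr hz, add_mul, Complex.exp_add,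
      ← Complex.ofReal_log hr.le]

lemma my_coord_le_norm {n : ℕ} (ξ : EuclideanSpace ℝ (Fin n)) (i : Fin n) :
    |ξ i| ≤ ‖ξ‖ := by
  have h1 : |ξ i| = Real.sqrt ((ξ i) ^ 2) := (Real.sqrt_sq_eq_abs _).symm
  rw [h1, EuclideanSpace.norm_eq]
  apply Real.sqrt_le_sqrt
  have : (ξ i) ^ 2 = ‖ξ i‖ ^ 2 := by rw [Real.norm_eq_abs, sq_abs]
  rw [this]
  exact Finset.single_le_sum (f := fun j => ‖ξ j‖ ^ 2)
    (fun j _ => sq_nonneg _) (Finset.mem_univ i)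

lemma my_prod_smul {n : ℕ} {r : ℝ} (hr : 0 < r) (ξ : EuclideanSpace ℝ (Fin n))
    (α : Fin n → ℝ) :
    ∏ i, (((r • ξ) i : ℂ)) ^ ((α i : ℂ)) =
      ((r ^ (∑ i, α i) : ℝ) : ℂ) * ∏ i, ((ξ i : ℂ)) ^ ((α i : ℂ)) := by
  have h1 : ∀ i : Fin n, (((r • ξ) i : ℂ)) ^ ((α i : ℂ)) =
      (r : ℂ) ^ (α i : ℂ) * ((ξ i : ℂ)) ^ ((α i : ℂ)) := by
    intro i
    have : ((r • ξ) i : ℂ) = (r : ℂ) * (ξ i : ℂ) := by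
      simp [PiLp.smul_apply, smul_eq_mul]
    rw [this, my_real_mul_cpow hr]
  rw [Finset.prod_congr rfl (fun i _ => h1 i), Finset.prod_mul_distrib]
  congr 1
  rw [Real.rpow_sum_of_pos hr, Complex.ofReal_prod]
  exact Finset.prod_congr rfl fun i _ => (Complex.ofReal_cpow hr.le (α i)).symm

lemma my_cont {n : ℕ} (A' : Finset (Fin n → ℝ)) (hnn : ∀ α ∈ A', ∀ i, 0 ≤ α i)
    (c : (Fin n → ℝ) → ℂ) :
    Continuous (fun ξ : EuclideanSpace ℝ (Fin n) =>
      ∑ α ∈ A', c α * ∏ i, ((ξ i : ℂ)) ^ ((α i : ℂ))) := by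
  apply continuous_finset_sum
  intro α hα
  apply Continuous.mul continuous_const
  apply continuous_finset_prod
  intro i _
  rcases (hnn α hα i).lt_or_eq with hpos | h0
  · have hc : Continuous (fun x : ℝ => (x : ℂ) ^ ((α i : ℝ) : ℂ)) :=
      Complex.continuous_ofReal_cpow_const (by simpa using hpos)
    exact hc.comp (EuclideanSpace.proj (𝕜 := ℝ) i).continuous
  · have : (fun ξ : EuclideanSpace ℝ (Fin n) => ((ξ i : ℂ)) ^ ((α i : ℂ))) =
        fun _ => 1 := by
      funext ξ; rw [← h0]; simp
    rw [this]; exact continuous_const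

/-- Lemma 8 (bounds): if `P(D)` is a `ν`-th order elliptic fractional partial
differential operator, then there exist `C, R > 0` with
`|P(λ)| ≥ C (1 + |λ|²)^{ν/2}` for `|λ| > R`. -/
theorem elliptic_operator_lower_bound (n : ℕ) (hn : 1 ≤ n)
    (A : Finset (Fin n → ℝ)) (hA : A.Nonempty)
    (hnonneg : ∀ α ∈ A, ∀ i, 0 ≤ α i)
    (c : (Fin n → ℝ) → ℂ)
    (ν : ℝ) (hν : ν = A.sup' hA (fun α => ∑ i, α i))
    (P σP : EuclideanSpace ℝ (Fin n) → ℂ)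
    (hP : ∀ ξ : EuclideanSpace ℝ (Fin n),
      P ξ = ∑ α ∈ A, c α * ∏ i, ((ξ i : ℂ)) ^ ((α i : ℂ)))
    (hσP : ∀ ξ : EuclideanSpace ℝ (Fin n),
      σP ξ = ∑ α ∈ A.filter (fun α => ∑ i, α i = ν),
        c α * ∏ i, ((ξ i : ℂ)) ^ ((α i : ℂ)))
    (hell : ∀ ξ : EuclideanSpace ℝ (Fin n), ξ ≠ 0 → σP ξ ≠ 0) :
    ∃ C : ℝ, 0 < C ∧ ∃ R : ℝ, 0 < R ∧
      ∀ ξ : EuclideanSpace ℝ (Fin n), R < ‖ξ‖ →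
        C * (1 + ‖ξ‖ ^ 2) ^ (ν / 2) ≤ ‖P ξ‖ := by
  classical
  have hν0 : 0 ≤ ν := by
    obtain ⟨α0, hα0⟩ := id hA
    calc (0:ℝ) ≤ ∑ i, α0 i := Finset.sum_nonneg fun i _ => hnonneg α0 hα0 i
    _ ≤ A.sup' hA (fun α => ∑ i, α i) := Finset.le_sup' _ hα0
    _ = ν := hν.symm
  have hsne : (Metric.sphere (0 : EuclideanSpace ℝ (Fin n)) 1).Nonempty := by
    refine ⟨EuclideanSpace.single ⟨0, hn⟩ (1:ℝ), ?_⟩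
    rw [mem_sphere_zero_iff_norm, EuclideanSpace.norm_single]
    norm_num
  have hcont : Continuous σP := by
    have h : σP = fun ξ => ∑ α ∈ A.filter (fun α => ∑ i, α i = ν),
        c α * ∏ i, ((ξ i : ℂ)) ^ ((α i : ℂ)) := funext hσP
    rw [h]
    exact my_cont _ (fun α hα i => hnonneg α (Finset.mem_of_mem_filter α hα) i) c
  obtain ⟨u0, hu0S, hu0min⟩ := (isCompact_sphere (0 : EuclideanSpace ℝ (Fin n))
    1).exists_isMinOn hsne (continuous_norm.comp hcont).continuousOn
  set m := ‖σP u0‖ with hm_def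
  have hm : 0 < m := by
    have hu0 : u0 ≠ 0 := by
      have h1 : ‖u0‖ = 1 := mem_sphere_zero_iff_norm.mp hu0S
      intro h; rw [h] at h1; simp at h1
    exact norm_pos_iff.mpr (hell u0 hu0)
  have hscale : ∀ ξ : EuclideanSpace ℝ (Fin n), ξ ≠ 0 → m * ‖ξ‖ ^ ν ≤ ‖σP ξ‖ := by
    intro ξ hξ
    have hr : 0 < ‖ξ‖ := norm_pos_iff.mpr hξ
    set u : EuclideanSpace ℝ (Fin n) := ‖ξ‖⁻¹ • ξ with hu_def
    have hun : ‖u‖ = 1 := by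
      rw [hu_def, norm_smul, norm_inv, norm_norm, inv_mul_cancel₀ hr.ne']
    have hξu : ξ = ‖ξ‖ • u := by rw [hu_def, smul_inv_smul₀ hr.ne']
    have key : σP (‖ξ‖ • u) = ((‖ξ‖ ^ ν : ℝ) : ℂ) * σP u := by
      rw [hσP (‖ξ‖ • u), hσP u, Finset.mul_sum]
      refine Finset.sum_congr rfl fun α hα => ?_
      obtain ⟨hαA, hαν⟩ := Finset.mem_filter.mp hα
      rw [my_prod_smul hr u α, hαν]
      ring
    calc m * ‖ξ‖ ^ ν ≤ ‖σP u‖ * ‖ξ‖ ^ ν := by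
          apply mul_le_mul_of_nonneg_right
            (hu0min (by rwa [mem_sphere_zero_iff_norm]))
            (Real.rpow_nonneg hr.le ν)
    _ = ‖σP (‖ξ‖ • u)‖ := by
          rw [key, norm_mul, Complex.norm_real, Real.norm_eq_abs,
            abs_of_nonneg (Real.rpow_nonneg hr.le ν), mul_comm]
    _ = ‖σP ξ‖ := by rw [← hξu]
  set B := A.filter (fun α => ¬ (∑ i, α i = ν)) with hB_def
  set K := ∑ α ∈ B, ‖c α‖ with hK_def
  have hK0 : 0 ≤ K := Finset.sum_nonneg fun _ _ => norm_nonneg _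
  set μ : ℝ := if h : B.Nonempty then B.sup' h (fun α => ∑ i, α i) else ν - 1
    with hμ_def
  have hμlt : μ < ν := by
    rw [hμ_def]; split_ifs with h
    · refine (Finset.sup'_lt_iff h).mpr fun α hα => ?_
      obtain ⟨hαA, hαν⟩ := Finset.mem_filter.mp hα
      exact lt_of_le_of_ne (by rw [hν]; exact Finset.le_sup' _ hαA) hαν
    · linarith
  have hμle : ∀ α ∈ B, ∑ i, α i ≤ μ := by
    intro α hα
    rw [hμ_def, dif_pos ⟨α, hα⟩]
    exact Finset.le_sup' _ hα
  have hdiff : ∀ ξ : EuclideanSpace ℝ (Fin n), 1 ≤ ‖ξ‖ →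
      ‖P ξ - σP ξ‖ ≤ K * ‖ξ‖ ^ μ := by
    intro ξ hξ1
    have hξ0 : (0:ℝ) < ‖ξ‖ := lt_of_lt_of_le one_pos hξ1
    have hPB : P ξ - σP ξ = ∑ α ∈ B, c α * ∏ i, ((ξ i : ℂ)) ^ ((α i : ℂ)) := by
      rw [hP, hσP, hB_def, sub_eq_iff_eq_add, add_comm,
        Finset.sum_filter_add_sum_filter_not]
    rw [hPB]
    calc ‖∑ α ∈ B, c α * ∏ i, ((ξ i : ℂ)) ^ ((α i : ℂ))‖
        ≤ ∑ α ∈ B, ‖c α * ∏ i, ((ξ i : ℂ)) ^ ((α i : ℂ))‖ := norm_sum_le _ _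
    _ ≤ ∑ α ∈ B, ‖c α‖ * ‖ξ‖ ^ μ := by
        refine Finset.sum_le_sum fun α hα => ?_
        rw [norm_mul]
        refine mul_le_mul_of_nonneg_left ?_ (norm_nonneg _)
        calc ‖∏ i, ((ξ i : ℂ)) ^ ((α i : ℂ))‖ = ∏ i, |ξ i| ^ (α i) := by
              rw [norm_prod]
              refine Finset.prod_congr rfl fun i _ => ?_
              rw [Complex.norm_cpow_real, Complex.norm_real, Real.norm_eq_abs]
        _ ≤ ∏ i, ‖ξ‖ ^ (α i) := by
              refine Finset.prod_le_prod
                (fun i _ => Real.rpow_nonneg (abs_nonneg _) _) fun i _ => ?_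
              exact Real.rpow_le_rpow (abs_nonneg _) (my_coord_le_norm ξ i)
                (hnonneg α (Finset.mem_of_mem_filter α hα) i)
        _ = ‖ξ‖ ^ (∑ i, α i) := (Real.rpow_sum_of_pos hξ0 _ _).symm
        _ ≤ ‖ξ‖ ^ μ := Real.rpow_le_rpow_of_exponent_le hξ1 (hμle α hα)
    _ = K * ‖ξ‖ ^ μ := by rw [← Finset.sum_mul]
  set d := ν - μ with hd_def
  have hd : 0 < d := by rw [hd_def]; linarith
  set x0 := max 1 (2 * K / m) with hx0_def
  have hx01 : (1:ℝ) ≤ x0 := le_max_left _ _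
  have hx00 : (0:ℝ) < x0 := lt_of_lt_of_le one_pos hx01
  set R := 1 + x0 ^ (1/d) with hR_def
  have hx0d : (0:ℝ) ≤ x0 ^ (1/d) := Real.rpow_nonneg hx00.le _
  have hR1 : 1 ≤ R := by rw [hR_def]; linarith
  have h2ν : (0:ℝ) < (2:ℝ) ^ (ν/2) := Real.rpow_pos_of_pos two_pos _
  refine ⟨m / 2 / (2:ℝ) ^ (ν/2), by positivity, R, by linarith, ?_⟩
  intro ξ hξR
  have hr1 : 1 < ‖ξ‖ := lt_of_le_of_lt hR1 hξR
  have hr0 : (0:ℝ) < ‖ξ‖ := lt_trans one_pos hr1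
  have hξ0 : ξ ≠ 0 := by
    intro h; rw [h, norm_zero] at hr0; exact lt_irrefl 0 hr0
  have hKb : K * ‖ξ‖ ^ μ ≤ m / 2 * ‖ξ‖ ^ ν := by
    have h2 : x0 ^ (1/d) ≤ ‖ξ‖ := by
      have hxR : x0 ^ (1/d) < R := by rw [hR_def]; linarith
      exact (hxR.trans hξR).le
    have h1 : x0 ≤ ‖ξ‖ ^ d := by
      calc x0 = (x0 ^ (1/d)) ^ d := by
            rw [← Real.rpow_mul hx00.le, one_div_mul_cancel hd.ne', Real.rpow_one]
      _ ≤ ‖ξ‖ ^ d := Real.rpow_le_rpow hx0d h2 hd.le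
    have h3 : 2 * K / m ≤ ‖ξ‖ ^ d := le_trans (le_max_right _ _) h1
    have h4 : K ≤ m / 2 * ‖ξ‖ ^ d := by
      rw [div_le_iff₀ hm] at h3
      linarith
    calc K * ‖ξ‖ ^ μ ≤ (m / 2 * ‖ξ‖ ^ d) * ‖ξ‖ ^ μ :=
          mul_le_mul_of_nonneg_right h4 (Real.rpow_nonneg hr0.le μ)
    _ = m / 2 * ‖ξ‖ ^ ν := by
          rw [mul_assoc, ← Real.rpow_add hr0]
          congr 2
          rw [hd_def]; ring
  have hlow : m * ‖ξ‖ ^ ν ≤ ‖σP ξ‖ := hscale ξ hξ0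
  have htri : ‖σP ξ‖ ≤ ‖P ξ‖ + ‖P ξ - σP ξ‖ := by
    calc ‖σP ξ‖ = ‖P ξ - (P ξ - σP ξ)‖ := by rw [sub_sub_cancel]
    _ ≤ ‖P ξ‖ + ‖P ξ - σP ξ‖ := norm_sub_le _ _
  have hPlow : m / 2 * ‖ξ‖ ^ ν ≤ ‖P ξ‖ := by
    have hd2 := hdiff ξ hr1.le
    linarith
  have hcomp : (1 + ‖ξ‖ ^ 2) ^ (ν/2) ≤ (2:ℝ) ^ (ν/2) * ‖ξ‖ ^ ν := by
    have h1 : (1:ℝ) + ‖ξ‖ ^ 2 ≤ 2 * ‖ξ‖ ^ 2 := by nlinarith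
    calc (1 + ‖ξ‖ ^ 2) ^ (ν/2) ≤ (2 * ‖ξ‖ ^ 2) ^ (ν/2) :=
          Real.rpow_le_rpow (by positivity) h1 (by positivity)
    _ = (2:ℝ) ^ (ν/2) * (‖ξ‖ ^ 2) ^ (ν/2) := Real.mul_rpow (by norm_num) (by positivity)
    _ = (2:ℝ) ^ (ν/2) * ‖ξ‖ ^ ν := by
          congr 1
          rw [← Real.rpow_natCast ‖ξ‖ 2, ← Real.rpow_mul hr0.le]
          congr 1
          push_cast
          ring
  calc m / 2 / (2:ℝ) ^ (ν/2) * (1 + ‖ξ‖ ^ 2) ^ (ν/2)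
      ≤ m / 2 / (2:ℝ) ^ (ν/2) * ((2:ℝ) ^ (ν/2) * ‖ξ‖ ^ ν) :=
        mul_le_mul_of_nonneg_left hcomp (by positivity)
  _ = m / 2 * ‖ξ‖ ^ ν := by field_simp
  _ ≤ ‖P ξ‖ := hPlow
end

section
/- Let A be a finite nonempty set of nonnegative real numbers, let c : A → ℂ, let ν := max A, and assume c_ν ≠ 0. Define P : ℝ → ℂ by P(λ) = Σ_{a ∈ A} c_a · λ^a for λ > 0, where λ^a is the real power (rpow) coerced to ℂ. Then for every k ∈ ℕ there exist constants C > 0 and R > 0 such that for all real λ > R, P(λ) ≠ 0 and the k-th iterated derivative of the function λ ↦ (P(λ))⁻¹ satisfies |(d/dλ)^k (P⁻¹)(λ)| ≤ C · λ^{−ν−k}. -/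
open Finset Filter

/-- Symbol classes: finite sums of terms `d · x^e · (P x)⁻ⁿ` with `e - nν ≤ μ`. -/
inductive GoodSym (P : ℝ → ℂ) (ν : ℝ) : ℝ → (ℝ → ℂ) → Prop
  | term (μ : ℝ) (d : ℂ) (e : ℝ) (n : ℕ) (he : e - n * ν ≤ μ) :
      GoodSym P ν μ (fun x => d * ((x ^ e : ℝ) : ℂ) * ((P x)⁻¹) ^ n)
  | add {μ : ℝ} {f g : ℝ → ℂ} : GoodSym P ν μ f → GoodSym P ν μ g →
      GoodSym P ν μ (fun x => f x + g x)

lemma GoodSym.zero (P : ℝ → ℂ) (ν μ : ℝ) : GoodSym P ν μ (fun _ => (0 : ℂ)) := by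
  simpa using GoodSym.term (P := P) (ν := ν) μ 0 μ 0 (by simp)

lemma GoodSym.finsetSum {P : ℝ → ℂ} {ν μ : ℝ} {ι : Type*} (s : Finset ι) (F : ι → ℝ → ℂ)
    (h : ∀ i ∈ s, GoodSym P ν μ (F i)) :
    GoodSym P ν μ (fun x => ∑ i ∈ s, F i x) := by
  classical
  induction s using Finset.induction_on with
  | empty => simpa using GoodSym.zero P ν μ
  | @insert a s ha ih =>
      simp only [Finset.sum_insert ha]
      exact (h a (Finset.mem_insert_self a s)).add
        (ih fun i hi => h i (Finset.mem_insert_of_mem hi))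

lemma GoodSym.hasDeriv {A : Finset ℝ} {c : ℝ → ℂ} {P : ℝ → ℂ} {ν R₀ : ℝ}
    (hP : ∀ x : ℝ, 0 < x → P x = ∑ a ∈ A, c a * ((x ^ a : ℝ) : ℂ))
    (hν : ∀ a ∈ A, a ≤ ν) (hR₀ : 0 < R₀)
    (hPne : ∀ x : ℝ, R₀ < x → P x ≠ 0)
    {μ : ℝ} {f : ℝ → ℂ} (hf : GoodSym P ν μ f) :
    ∃ g : ℝ → ℂ, GoodSym P ν (μ - 1) g ∧ ∀ x : ℝ, R₀ < x → HasDerivAt f (g x) x := by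
  induction hf with
  | add h1 h2 ih1 ih2 =>
      obtain ⟨g1, hg1, hd1⟩ := ih1
      obtain ⟨g2, hg2, hd2⟩ := ih2
      exact ⟨fun x => g1 x + g2 x, hg1.add hg2, fun x hx => (hd1 x hx).add (hd2 x hx)⟩
  | term d e n he =>
      classical
      refine ⟨fun x => d * e * ((x ^ (e - 1) : ℝ) : ℂ) * ((P x)⁻¹) ^ n
          + ∑ a ∈ A, -(d * n * c a * a) * ((x ^ (e + a - 1) : ℝ) : ℂ) * ((P x)⁻¹) ^ (n + 1),
        ?_, ?_⟩
      · refine (GoodSym.term _ _ _ _ (by push_cast; linarith)).add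
          (GoodSym.finsetSum A _ fun a ha => GoodSym.term _ _ _ _ ?_)
        have haν := hν a ha
        push_cast
        linarith
      · intro x hx
        have hx0 : (0 : ℝ) < x := hR₀.trans hx
        have hne := hPne x hx
        have hPd : HasDerivAt P (∑ a ∈ A, c a * a * ((x ^ (a - 1) : ℝ) : ℂ)) x := by
          have hs : HasDerivAt (fun y : ℝ => ∑ a ∈ A, c a * ((y ^ a : ℝ) : ℂ))
              (∑ a ∈ A, c a * a * ((x ^ (a - 1) : ℝ) : ℂ)) x := by
            apply HasDerivAt.fun_sum
            intro a _
            have h := (Real.hasDerivAt_rpow_const (x := x) (p := a)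
              (Or.inl hx0.ne')).ofReal_comp
            have h2 := h.const_mul (c a)
            rw [show c a * a * ((x ^ (a - 1) : ℝ) : ℂ) = c a * ((a * x ^ (a - 1) : ℝ) : ℂ) by push_cast; ring]
            exact h2
          exact hs.congr_of_eventuallyEq
            (Filter.eventuallyEq_of_mem (Ioi_mem_nhds hx0) fun y hy => hP y hy)
        set S := ∑ a ∈ A, c a * a * ((x ^ (a - 1) : ℝ) : ℂ) with hS
        have hq : HasDerivAt (fun y => (P y)⁻¹) (-S * ((P x)⁻¹) ^ 2) x := by
          have h := (hasDerivAt_inv hne).scomp x hPd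
          simp only [Function.comp_def, smul_eq_mul] at h
          rw [show -S * ((P x)⁻¹) ^ 2 = S * -(P x ^ 2)⁻¹ by rw [inv_pow]; ring]
          exact h
        have hqn : HasDerivAt (fun y => ((P y)⁻¹) ^ n)
            ((-S * ((P x)⁻¹) ^ 2) * ((n : ℂ) * ((P x)⁻¹) ^ (n - 1))) x := by
          have h := (hasDerivAt_pow n ((P x)⁻¹)).scomp x hq
          simpa only [Function.comp_def, smul_eq_mul] using h
        have hxe : HasDerivAt (fun y : ℝ => ((y ^ e : ℝ) : ℂ))
            (((e * x ^ (e - 1) : ℝ)) : ℂ) x :=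
          (Real.hasDerivAt_rpow_const (Or.inl hx0.ne')).ofReal_comp
        have hprod := (hxe.mul hqn).const_mul d
        have h3 : HasDerivAt (fun y => d * ((y ^ e : ℝ) : ℂ) * ((P y)⁻¹) ^ n)
            (d * (((e * x ^ (e - 1) : ℝ) : ℂ) * ((P x)⁻¹) ^ n +
              ((x ^ e : ℝ) : ℂ) * ((-S * ((P x)⁻¹) ^ 2) * ((n : ℂ) * ((P x)⁻¹) ^ (n - 1))))) x := by
          simpa only [Pi.mul_apply, ← mul_assoc] using hprod
        convert h3 using 1
        have hxea : ∀ a ∈ A, ((x ^ (e + a - 1) : ℝ) : ℂ)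
            = ((x ^ e : ℝ) : ℂ) * ((x ^ (a - 1) : ℝ) : ℂ) := by
          intro a _
          rw [← Complex.ofReal_mul, ← Real.rpow_add hx0]
          ring_nf
        have key : ∑ a ∈ A, -(d * n * c a * a) * ((x ^ (e + a - 1) : ℝ) : ℂ)
              * ((P x)⁻¹) ^ (n + 1)
            = -(d * n) * ((x ^ e : ℝ) : ℂ) * ((P x)⁻¹) ^ (n + 1) * S := by
          rw [hS, Finset.mul_sum]
          refine Finset.sum_congr rfl fun a ha => ?_
          rw [hxea a ha]; push_cast; ring
        beta_reduce
        rw [key]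
        rcases n with _ | nn
        · push_cast; ring
        · simp only [Nat.succ_sub_one]
          push_cast
          ring

lemma GoodSym.bound {P : ℝ → ℂ} {ν m R₀ : ℝ} (hm : 0 < m) (hR₀ : 1 ≤ R₀)
    (hlow : ∀ x : ℝ, R₀ < x → m * x ^ ν ≤ ‖P x‖)
    {μ : ℝ} {f : ℝ → ℂ} (hf : GoodSym P ν μ f) :
    ∃ C : ℝ, 0 < C ∧ ∀ x : ℝ, R₀ < x → ‖f x‖ ≤ C * x ^ μ := by
  induction hf with
  | add h1 h2 ih1 ih2 =>
      obtain ⟨C1, hC1, hb1⟩ := ih1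
      obtain ⟨C2, hC2, hb2⟩ := ih2
      refine ⟨C1 + C2, by positivity, fun x hx => ?_⟩
      calc ‖_ + _‖ ≤ _ := norm_add_le _ _
        _ ≤ C1 * x ^ μ + C2 * x ^ μ := add_le_add (hb1 x hx) (hb2 x hx)
        _ = (C1 + C2) * x ^ μ := by ring
  | term d e n he =>
      refine ⟨(‖d‖ + 1) / m ^ n, by positivity, fun x hx => ?_⟩
      have hx1 : (1 : ℝ) ≤ x := hR₀.trans hx.le
      have hx0 : (0 : ℝ) < x := lt_of_lt_of_le zero_lt_one hx1
      have hPx := hlow x hx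
      have hmx : (0 : ℝ) < m * x ^ ν := by positivity
      have hQ : ‖(P x)⁻¹‖ ≤ (m * x ^ ν)⁻¹ := by
        rw [norm_inv]
        exact inv_anti₀ hmx hPx
      have hkey : ((x ^ ν : ℝ)⁻¹) ^ n = x ^ (-ν * (n : ℝ)) := by
        rw [← Real.rpow_neg hx0.le, ← Real.rpow_natCast (x ^ (-ν)) n, ← Real.rpow_mul hx0.le]
      calc ‖d * ((x ^ e : ℝ) : ℂ) * ((P x)⁻¹) ^ n‖
          = ‖d‖ * x ^ e * ‖(P x)⁻¹‖ ^ n := by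
            rw [norm_mul, norm_mul, norm_pow, Complex.norm_real, Real.norm_eq_abs,
              abs_of_nonneg (Real.rpow_nonneg hx0.le e)]
        _ ≤ ‖d‖ * x ^ e * ((m * x ^ ν)⁻¹) ^ n := by
            gcongr
        _ = (‖d‖ / m ^ n) * (x ^ e * x ^ (-ν * (n : ℝ))) := by
            rw [mul_inv, mul_pow, hkey]
            ring
        _ = (‖d‖ / m ^ n) * x ^ (e - ν * n) := by
            rw [← Real.rpow_add hx0]
            ring_nf
        _ ≤ (‖d‖ / m ^ n) * x ^ μ := by
            have := Real.rpow_le_rpow_of_exponent_le hx1 (show e - ν * n ≤ μ by push_cast at he ⊢; linarith)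
            have h0 : (0:ℝ) ≤ ‖d‖ / m ^ n := by positivity
            exact mul_le_mul_of_nonneg_left this h0
        _ ≤ ((‖d‖ + 1) / m ^ n) * x ^ μ := by
            have h0 : (0:ℝ) ≤ x ^ μ := Real.rpow_nonneg hx0.le μ
            have : ‖d‖ / m ^ n ≤ (‖d‖ + 1) / m ^ n := by
              gcongr
              linarith
            exact mul_le_mul_of_nonneg_right this h0

lemma symbol_lower_bound (A : Finset ℝ) (hA : A.Nonempty) (c : ℝ → ℂ)
    (hc : c (A.max' hA) ≠ 0) (P : ℝ → ℂ)
    (hP : ∀ x : ℝ, 0 < x → P x = ∑ a ∈ A, c a * ((x ^ a : ℝ) : ℂ)) :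
    ∃ m : ℝ, 0 < m ∧ ∃ R₀ : ℝ, 1 ≤ R₀ ∧
      ∀ x : ℝ, R₀ < x → m * x ^ (A.max' hA) ≤ ‖P x‖ := by
  classical
  set ν := A.max' hA with hν
  set g : ℝ → ℂ := fun x => ∑ a ∈ A, c a * ((x ^ (a - ν) : ℝ) : ℂ) with hg
  have htend : Tendsto g atTop (nhds (c ν)) := by
    have hsum : Tendsto g atTop
        (nhds (∑ a ∈ A, if a = ν then c ν else 0)) := by
      apply tendsto_finset_sum
      intro a ha
      by_cases hcase : a = ν
      · simp only [if_pos hcase, hcase, sub_self]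
        have : (fun x : ℝ => c ν * ((x ^ (0:ℝ) : ℝ) : ℂ)) = fun _ => c ν := by
          funext x; simp [Real.rpow_zero]
        rw [this]
        exact tendsto_const_nhds
      · simp only [if_neg hcase]
        have haν : a < ν := lt_of_le_of_ne (Finset.le_max' A a ha) hcase
        have h0 : Tendsto (fun x : ℝ => x ^ (a - ν)) atTop (nhds 0) := by
          have := tendsto_rpow_neg_atTop (show (0:ℝ) < ν - a by linarith)
          simpa [neg_sub] using this
        have h1 : Tendsto (fun x : ℝ => ((x ^ (a - ν) : ℝ) : ℂ)) atTop (nhds 0) := by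
          have := (Complex.continuous_ofReal.tendsto 0).comp h0
          simpa [Function.comp_def] using this
        simpa using h1.const_mul (c a)
    have : (∑ a ∈ A, if a = ν then c ν else 0) = c ν := by
      rw [Finset.sum_ite_eq' A ν (fun _ => c ν)]
      simp [hν, Finset.max'_mem A hA]
    rwa [this] at hsum
  have hnorm : Tendsto (fun x => ‖g x‖) atTop (nhds ‖c ν‖) := htend.norm
  have hev : ∀ᶠ x in atTop, ‖c ν‖ / 2 ≤ ‖g x‖ :=
    hnorm.eventually (eventually_ge_nhds (by have := norm_pos_iff.2 hc; linarith))
  obtain ⟨R₁, hR₁⟩ := eventually_atTop.1 hev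
  refine ⟨‖c ν‖ / 2, by have := norm_pos_iff.2 hc; linarith, max R₁ 1, le_max_right _ _,
    fun x hx => ?_⟩
  have hx1 : (1:ℝ) < x := lt_of_le_of_lt (le_max_right R₁ 1) hx
  have hx0 : (0:ℝ) < x := lt_trans zero_lt_one hx1
  have hgx := hR₁ x (le_of_lt (lt_of_le_of_lt (le_max_left R₁ 1) hx))
  have hfac : P x = ((x ^ ν : ℝ) : ℂ) * g x := by
    rw [hP x hx0, hg, Finset.mul_sum]
    refine Finset.sum_congr rfl fun a ha => ?_
    have hxa : ((x ^ a : ℝ) : ℂ) = ((x ^ ν : ℝ) : ℂ) * ((x ^ (a - ν) : ℝ) : ℂ) := by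
      rw [← Complex.ofReal_mul, ← Real.rpow_add hx0]
      ring_nf
    rw [hxa]; ring
  rw [hfac, norm_mul, Complex.norm_real, Real.norm_eq_abs,
    abs_of_nonneg (Real.rpow_nonneg hx0.le ν)]
  calc ‖c ν‖ / 2 * x ^ ν = x ^ ν * (‖c ν‖ / 2) := by ring
    _ ≤ x ^ ν * ‖g x‖ := by
        have := Real.rpow_nonneg hx0.le ν
        exact mul_le_mul_of_nonneg_left hgx this

/-- Derivative decay estimate for the reciprocal of a one-dimensional elliptic
fractional symbol: for every `k` there are `C, R > 0` such that for `λ > R`,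
`P(λ) ≠ 0` and `|(d/dλ)^k (1/P)(λ)| ≤ C λ^{-ν-k}` where `ν = max A`. -/
theorem reciprocal_symbol_derivative_decay (A : Finset ℝ) (hA : A.Nonempty)
    (hnonneg : ∀ a ∈ A, 0 ≤ a) (c : ℝ → ℂ) (hc : c (A.max' hA) ≠ 0)
    (P : ℝ → ℂ)
    (hP : ∀ x : ℝ, 0 < x → P x = ∑ a ∈ A, c a * ((x ^ a : ℝ) : ℂ)) :
    ∀ k : ℕ, ∃ C : ℝ, 0 < C ∧ ∃ R : ℝ, 0 < R ∧
      ∀ x : ℝ, R < x →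
        P x ≠ 0 ∧
          ‖iteratedDeriv k (fun y : ℝ => (P y)⁻¹) x‖ ≤
            C * x ^ (-(A.max' hA) - (k : ℝ)) := by
  intro k
  obtain ⟨m, hm, R₀, hR₀, hlow⟩ := symbol_lower_bound A hA c hc P hP
  have hν : ∀ a ∈ A, a ≤ A.max' hA := fun a ha => Finset.le_max' A a ha
  have hR₀0 : (0:ℝ) < R₀ := lt_of_lt_of_le zero_lt_one hR₀
  have hPne : ∀ x : ℝ, R₀ < x → P x ≠ 0 := by
    intro x hx
    have hx0 : (0:ℝ) < x := lt_trans hR₀0 hx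
    have h1 : (0:ℝ) < m * x ^ (A.max' hA) := by positivity
    have h2 := lt_of_lt_of_le h1 (hlow x hx)
    exact norm_pos_iff.1 h2
  have main : ∀ j : ℕ, ∃ f : ℝ → ℂ,
      GoodSym P (A.max' hA) (-(A.max' hA) - (j : ℝ)) f ∧
      ∀ x : ℝ, R₀ < x → iteratedDeriv j (fun y : ℝ => (P y)⁻¹) x = f x := by
    intro j
    induction j with
    | zero =>
        refine ⟨fun x => 1 * ((x ^ (0:ℝ) : ℝ) : ℂ) * ((P x)⁻¹) ^ 1,
          GoodSym.term _ 1 0 1 (by norm_num), ?_⟩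
        intro x hx
        simp [Real.rpow_zero]
    | succ j ih =>
        obtain ⟨f, hf, heq⟩ := ih
        obtain ⟨g, hg, hd⟩ := GoodSym.hasDeriv hP hν hR₀0 hPne hf
        refine ⟨g, ?_, ?_⟩
        · have hμ : -(A.max' hA) - ((j + 1 : ℕ) : ℝ) = -(A.max' hA) - (j : ℝ) - 1 := by
            push_cast; ring
          rw [hμ]
          exact hg
        · intro x hx
          rw [iteratedDeriv_succ]
          have hev : iteratedDeriv j (fun y : ℝ => (P y)⁻¹) =ᶠ[nhds x] f :=
            Filter.eventuallyEq_of_mem (Ioi_mem_nhds hx) fun y hy => heq y hy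
          rw [hev.deriv_eq, (hd x hx).deriv]
  obtain ⟨f, hf, heq⟩ := main k
  obtain ⟨C, hC, hb⟩ := GoodSym.bound hm hR₀ hlow hf
  refine ⟨C, hC, R₀, hR₀0, fun x hx => ⟨hPne x hx, ?_⟩⟩
  rw [heq x hx]
  exact hb x hx
end

section
/- Let n ≥ 1 and let α ∈ ℝ with 0 < α < 1. Then for every λ ∈ ℝ^n with λ ≠ 0, the sum Σ_{i=1}^n (−i·λ_i)^α has strictly positive real part, and in particular Σ_{i=1}^n (−i·λ_i)^α ≠ 0; here (−i·λ_i)^α denotes the principal complex power Complex.cpow of −i times the complex coercion of λ_i (so each nonzero summand lies in the open right half-plane, having argument ±πα/2). Consequently the symbol of the fractional Laplace-type operator Σ_{i=1}^n ∂_i^α is nonvanishing on ℝ^n \ {0}, i.e. the operator is elliptic. -/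
open Finset Complex

lemma frac_term_re_pos {α : ℝ} (h0 : 0 < α) (h1 : α < 1) {x : ℝ} (hx : x ≠ 0) :
    0 < ((-Complex.I * (x : ℂ)) ^ (α : ℂ)).re := by
  have hz : (-Complex.I * (x : ℂ)) ≠ 0 := by
    simp [Complex.ext_iff, hx, Complex.I_ne_zero]
  have harg : |Complex.arg (-Complex.I * (x : ℂ))| = Real.pi / 2 := by
    rcases lt_or_gt_of_ne hx with hneg | hpos
    · have : (-Complex.I * (x : ℂ)) = ((-x : ℝ) : ℂ) * Complex.I := by
        push_cast; ring
      rw [this, Complex.arg_real_mul _ (by linarith : (0:ℝ) < -x), Complex.arg_I]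
      rw [abs_of_pos (by positivity)]
    · have : (-Complex.I * (x : ℂ)) = ((x : ℝ) : ℂ) * (-Complex.I) := by
        push_cast; ring
      rw [this, Complex.arg_real_mul _ hpos, Complex.arg_neg_I, abs_neg]
      rw [abs_of_pos (by positivity)]
  rw [Complex.cpow_def_of_ne_zero hz, Complex.exp_re]
  have him : (((α : ℂ)) * Complex.log (-Complex.I * (x : ℂ))).im
      = α * Complex.arg (-Complex.I * (x : ℂ)) := by
    simp [Complex.mul_im, Complex.log_im]
  have hcos : 0 < Real.cos ((((α : ℂ)) * Complex.log (-Complex.I * (x : ℂ))).im) := by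
    rw [him]
    apply Real.cos_pos_of_mem_Ioo
    constructor
    · have : |α * Complex.arg (-Complex.I * (x : ℂ))| < Real.pi / 2 := by
        rw [abs_mul, abs_of_pos h0, harg]
        have hπ : 0 < Real.pi / 2 := by positivity
        nlinarith
      linarith [neg_abs_le (α * Complex.arg (-Complex.I * (x : ℂ))),
        le_abs_self (α * Complex.arg (-Complex.I * (x : ℂ)))]
    · have : |α * Complex.arg (-Complex.I * (x : ℂ))| < Real.pi / 2 := by
        rw [abs_mul, abs_of_pos h0, harg]
        have hπ : 0 < Real.pi / 2 := by positivity
        nlinarith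
      linarith [le_abs_self (α * Complex.arg (-Complex.I * (x : ℂ)))]
  rw [mul_comm (Complex.log (-Complex.I * (x : ℂ))) (α : ℂ)]
  exact mul_pos (Real.exp_pos _) hcos

/-- The symbol `Σ_{i=1}^n (-iλ_i)^α` of the fractional Laplace-type operator
`Σ_i ∂_i^α` with `0 < α < 1` has strictly positive real part — and in particular
is nonzero — at every nonzero real frequency; i.e. the operator is elliptic. -/
theorem fractional_laplacian_elliptic (n : ℕ) (hn : 1 ≤ n) (α : ℝ)
    (h0 : 0 < α) (h1 : α < 1) :
    ∀ ξ : EuclideanSpace ℝ (Fin n), ξ ≠ 0 →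
      0 < (∑ i, (-Complex.I * (ξ i : ℂ)) ^ (α : ℂ)).re ∧
        (∑ i, (-Complex.I * (ξ i : ℂ)) ^ (α : ℂ)) ≠ 0 := by
  intro ξ hξ
  have hterm : ∀ i : Fin n, 0 ≤ ((-Complex.I * (ξ i : ℂ)) ^ (α : ℂ)).re := by
    intro i
    by_cases h : ξ i = 0
    · simp [h, Complex.zero_cpow (by exact_mod_cast h0.ne' : (α : ℂ) ≠ 0)]
    · exact (frac_term_re_pos h0 h1 h).le
  obtain ⟨i, hi⟩ : ∃ i, ξ i ≠ 0 := by
    by_contra h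
    push_neg at h
    exact hξ (PiLp.ext (fun j => by simp [h j]))
  have hpos : 0 < (∑ i, (-Complex.I * (ξ i : ℂ)) ^ (α : ℂ)).re := by
    rw [Complex.re_sum]
    exact Finset.sum_pos' (fun j _ => hterm j)
      ⟨i, Finset.mem_univ i, frac_term_re_pos h0 h1 hi⟩
  refine ⟨hpos, fun h => ?_⟩
  rw [h] at hpos
  simp at hpos
end
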